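/- arXiv:2009.04738 — 8 statements merged into one kernel-verified Lean document; each statement's English description precedes it below -/
import Mathlib

section
/- Let α ≥ 1 and n ≥ 2α + 1. If G is a graph on n vertices with matching number α'(G) = α, then the number of edges of G is at most max{ C(2α+1, 2), αn - α(α+1)/2 }. -/
open Matrix

noncomputable section
open scoped Classical

/-- The complete split graph `S_{n,k} = K_k ∇ (n-k)K_1`. -/
def splitGraph (n k : ℕ) : SimpleGraph (Fin n) where
  Adj i j := i ≠ j ∧ (i.val < k ∨ j.val < k)
  symm := ⟨fun i j h => ⟨h.1.symm, h.2.symm⟩⟩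
  loopless := ⟨fun i h => h.1 rfl⟩

/-- The graph `K_m ∪ (n-m)K_1`: a clique on the first `m` vertices plus isolated vertices. -/
def cliqueUnion (n m : ℕ) : SimpleGraph (Fin n) where
  Adj i j := i ≠ j ∧ i.val < m ∧ j.val < m
  symm := ⟨fun i j h => ⟨h.1.symm, h.2.2, h.2.1⟩⟩
  loopless := ⟨fun i h => h.1 rfl⟩

/-- The `k`-fan `F_k = K_1 ∇ kK_2`: vertex `0` is the common center, and for `m < k` the
vertices `2m+1, 2m+2` form the `m`-th edge of the matching joined to the center. -/
def fan (k : ℕ) : SimpleGraph (Fin (2 * k + 1)) where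
  Adj i j := i ≠ j ∧ (i = 0 ∨ j = 0 ∨ (i.val - 1) / 2 = (j.val - 1) / 2)
  symm := by
    constructor
    rintro i j ⟨h1, h2⟩
    refine ⟨h1.symm, ?_⟩
    rcases h2 with h | h | h
    · exact Or.inr (Or.inl h)
    · exact Or.inl h
    · exact Or.inr (Or.inr h.symm)
  loopless := ⟨fun i h => h.1 rfl⟩

/-- `G` contains a (not necessarily induced) subgraph isomorphic to `H`. -/
def ContainsSub {V W : Type*} (G : SimpleGraph V) (H : SimpleGraph W) : Prop :=
  ∃ f : W → V, Function.Injective f ∧ ∀ a b, H.Adj a b → G.Adj (f a) (f b)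

/-- `G` is `F_k`-free. -/
def FanFree {V : Type*} (G : SimpleGraph V) (k : ℕ) : Prop := ¬ ContainsSub G (fan k)

/-- `G` contains `k` pairwise disjoint edges. -/
def HasMatching {V : Type*} (G : SimpleGraph V) (k : ℕ) : Prop :=
  ∃ p : Fin k → V × V, (∀ i, G.Adj (p i).1 (p i).2) ∧
    ∀ i j, i ≠ j → (p i).1 ≠ (p j).1 ∧ (p i).1 ≠ (p j).2 ∧
      (p i).2 ≠ (p j).1 ∧ (p i).2 ≠ (p j).2

/-- The signless Laplacian matrix `Q(G) = D(G) + A(G)`. -/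
def signlessLaplacian {V : Type*} [Fintype V] (G : SimpleGraph V) : Matrix V V ℝ :=
  Matrix.of fun i j =>
    (if i = j then ((G.neighborSet i).ncard : ℝ) else 0) + (if G.Adj i j then 1 else 0)

/-- The signless Laplacian spectral radius `q_1(G)`: the largest eigenvalue of `Q(G)`. -/
def q1 {V : Type*} [Fintype V] (G : SimpleGraph V) : ℝ :=
  sSup (spectrum ℝ (signlessLaplacian G))

/-- The largest eigenvalue of a real matrix. -/
def lam1 {m : Type*} [Fintype m] [DecidableEq m] (M : Matrix m m ℝ) : ℝ :=
  sSup (spectrum ℝ M)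


namespace EGproof

/-- two pairs are vertex-disjoint -/
def Disj (e f : ℕ × ℕ) : Prop :=
  e.1 ≠ f.1 ∧ e.1 ≠ f.2 ∧ e.2 ≠ f.1 ∧ e.2 ≠ f.2

def Valid (n : ℕ) (E : Finset (ℕ × ℕ)) : Prop :=
  ∀ e ∈ E, e.1 < e.2 ∧ e.2 < n

/-- E contains k pairwise disjoint pairs -/
def hasM (E : Finset (ℕ × ℕ)) (k : ℕ) : Prop :=
  ∃ M : Finset (ℕ × ℕ), M ⊆ E ∧ M.card = k ∧ (M : Set (ℕ × ℕ)).Pairwise Disj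

def repl (i j : ℕ) (e : ℕ × ℕ) : ℕ × ℕ :=
  if e.1 = j then (i, e.2)
  else if e.2 = j ∧ e.1 ≠ i then (min e.1 i, max e.1 i) else e

def shf (i j : ℕ) (E : Finset (ℕ × ℕ)) : Finset (ℕ × ℕ) :=
  E.image (fun e => if repl i j e ∈ E then e else repl i j e)

def wt (E : Finset (ℕ × ℕ)) : ℕ := ∑ e ∈ E, (e.1 + e.2)

lemma disj_symm {e f : ℕ × ℕ} (h : Disj e f) : Disj f e := by
  obtain ⟨a,b,c,d⟩ := h; exact ⟨a.symm, c.symm, b.symm, d.symm⟩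

lemma not_disj_self {e : ℕ × ℕ} : ¬ Disj e e := fun h => h.1 rfl

section shift
variable {n i j : ℕ} {E : Finset (ℕ × ℕ)}

lemma repl_eq_or (e : ℕ × ℕ) : repl i j e = e ∨
    ((e.1 = j ∧ repl i j e = (i, e.2)) ∨ (e.2 = j ∧ e.1 ≠ i ∧ repl i j e = (min e.1 i, max e.1 i))) := by
  unfold repl
  by_cases h1 : e.1 = j
  · simp [h1]
  · by_cases h2 : e.2 = j ∧ e.1 ≠ i
    · right; right; simp [h1, h2, h2.1, h2.2]
    · left; simp [h1, h2]

lemma valid_repl (hV : Valid n E) (hij : i < j) (e : ℕ × ℕ) (he : e ∈ E) :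
    (repl i j e).1 < (repl i j e).2 ∧ (repl i j e).2 < n := by
  obtain ⟨h1, h2⟩ := hV e he
  rcases repl_eq_or (i := i) (j := j) e with h | ⟨hj, hr⟩ | ⟨hj, hne, hr⟩
  · rw [h]; exact ⟨h1, h2⟩
  · rw [hr]; exact ⟨lt_of_lt_of_le hij (by omega), h2⟩
  · rw [hr]
    rcases le_total e.1 i with h | h
    · rw [min_eq_left h, max_eq_right h]; omega
    · rw [min_eq_right h, max_eq_left h]; omega

/-- if `repl` changed the pair, the result contains `i` and not `j`. -/
lemma repl_ne_props (hV : Valid n E) (hij : i < j) (e : ℕ × ℕ) (he : e ∈ E)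
    (hne : repl i j e ≠ e) :
    ((repl i j e).1 = i ∨ (repl i j e).2 = i) ∧ (repl i j e).1 ≠ j ∧ (repl i j e).2 ≠ j := by
  obtain ⟨h1, h2⟩ := hV e he
  rcases repl_eq_or (i := i) (j := j) e with h | ⟨hj, hr⟩ | ⟨hj, hne', hr⟩
  · exact absurd h hne
  · rw [hr]; exact ⟨Or.inl rfl, by omega, by omega⟩
  · rw [hr]
    refine ⟨?_, ?_, ?_⟩
    · rcases le_total e.1 i with h | h
      · right; rw [max_eq_right h]
      · left; rw [min_eq_right h]
    · have := min_le_right e.1 i; omega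
    · have : max e.1 i < j := by
        rcases le_total e.1 i with h | h
        · rw [max_eq_right h]; omega
        · rw [max_eq_left h]; omega
      omega

/-- a pair containing `j` but not `i` is genuinely changed -/
lemma repl_ne_of_touch (hV : Valid n E) (hij : i < j) (e : ℕ × ℕ) (he : e ∈ E)
    (hj : e.1 = j ∨ e.2 = j) (hi : e.1 ≠ i ∧ e.2 ≠ i) : repl i j e ≠ e := by
  obtain ⟨h1, h2⟩ := hV e he
  rcases hj with hj | hj
  · unfold repl; simp only [hj, if_pos rfl]
    intro h; have := congrArg Prod.fst h; simp [hj] at this; omega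
  · have hne : e.1 ≠ j := by omega
    unfold repl; simp [hne, hj, hi.1]
    intro h
    rcases le_total e.1 i with h' | h'
    · rw [min_eq_left h', max_eq_right h'] at h
      have := congrArg Prod.snd h; simp at this; omega
    · rw [min_eq_right h', max_eq_left h'] at h
      have := congrArg Prod.fst h; simp at this; omega

end shift

section shift2
variable {n i j : ℕ} {E : Finset (ℕ × ℕ)}

lemma shf_fun_mem (hV : Valid n E) (hij : i < j) {e : ℕ × ℕ} (he : e ∈ E) :
    (if repl i j e ∈ E then e else repl i j e) ∈ shf i j E :=
  Finset.mem_image_of_mem _ he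

lemma shf_injOn (hV : Valid n E) (hij : i < j) :
    Set.InjOn (fun e => if repl i j e ∈ E then e else repl i j e) E := by
  intro e1 h1 e2 h2 heq
  simp only at heq
  by_cases c1 : repl i j e1 ∈ E <;> by_cases c2 : repl i j e2 ∈ E
  · simpa [c1, c2] using heq
  · rw [if_pos c1, if_neg c2] at heq
    exact absurd (by rw [← heq]; exact h1) c2
  · rw [if_neg c1, if_pos c2] at heq
    exact absurd (by rw [heq]; exact h2) c1
  · rw [if_neg c1, if_neg c2] at heq
    -- both replaced; recover original
    have n1 : repl i j e1 ≠ e1 := fun h => c1 (by rw [h]; exact h1)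
    have n2 : repl i j e2 ≠ e2 := fun h => c2 (by rw [h]; exact h2)
    obtain ⟨v1a, v1b⟩ := hV e1 h1
    obtain ⟨v2a, v2b⟩ := hV e2 h2
    rcases repl_eq_or (i := i) (j := j) e1 with h | ⟨hj1, hr1⟩ | ⟨hj1, hi1, hr1⟩ <;>
      [exact absurd h n1; skip; skip] <;>
    rcases repl_eq_or (i := i) (j := j) e2 with h | ⟨hj2, hr2⟩ | ⟨hj2, hi2, hr2⟩
    · exact absurd h n2
    · rw [hr1, hr2] at heq
      have := congrArg Prod.snd heq; simp at this
      exact Prod.ext (hj1.trans hj2.symm) this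
    · rw [hr1, hr2] at heq
      -- (i, e1.2) = (min e2.1 i, max e2.1 i) : impossible since e1.2 > j > i
      exfalso
      rcases le_total e2.1 i with h' | h'
      · rw [min_eq_left h', max_eq_right h'] at heq
        have := congrArg Prod.snd heq; simp at this; omega
      · rw [min_eq_right h', max_eq_left h'] at heq
        have h2' := congrArg Prod.snd heq; have h1' := congrArg Prod.fst heq
        simp at h2' h1'; omega
    · exact absurd h n2
    · exfalso
      rw [hr1, hr2] at heq
      rcases le_total e1.1 i with h' | h'
      · rw [min_eq_left h', max_eq_right h'] at heq
        have := congrArg Prod.snd heq; simp at this; omega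
      · rw [min_eq_right h', max_eq_left h'] at heq
        have h2' := congrArg Prod.snd heq; have h1' := congrArg Prod.fst heq
        simp at h2' h1'; omega
    · rw [hr1, hr2] at heq
      have hfst : e1.1 = e2.1 := by
        rcases le_total e1.1 i with ha | ha <;> rcases le_total e2.1 i with hb | hb
        · rw [min_eq_left ha, max_eq_right ha, min_eq_left hb, max_eq_right hb] at heq
          exact (Prod.ext_iff.mp heq).1
        · rw [min_eq_left ha, max_eq_right ha, min_eq_right hb, max_eq_left hb] at heq
          have h1' := congrArg Prod.fst heq; have h2' := congrArg Prod.snd heq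
          simp at h1' h2'; omega
        · rw [min_eq_right ha, max_eq_left ha, min_eq_left hb, max_eq_right hb] at heq
          have h1' := congrArg Prod.fst heq; have h2' := congrArg Prod.snd heq
          simp at h1' h2'; omega
        · rw [min_eq_right ha, max_eq_left ha, min_eq_right hb, max_eq_left hb] at heq
          exact (Prod.ext_iff.mp heq).2
      exact Prod.ext hfst (hj1.trans hj2.symm)

lemma shf_card (hV : Valid n E) (hij : i < j) : (shf i j E).card = E.card :=
  Finset.card_image_of_injOn (shf_injOn hV hij)

lemma shf_valid (hV : Valid n E) (hij : i < j) : Valid n (shf i j E) := by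
  intro e he
  obtain ⟨e0, he0, rfl⟩ := Finset.mem_image.mp he
  split
  · exact hV e0 he0
  · exact valid_repl hV hij e0 he0

lemma repl_sum_le (hV : Valid n E) (hij : i < j) (e : ℕ × ℕ) (he : e ∈ E) :
    (repl i j e).1 + (repl i j e).2 ≤ e.1 + e.2 := by
  obtain ⟨h1, h2⟩ := hV e he
  rcases repl_eq_or (i := i) (j := j) e with h | ⟨hj', hr⟩ | ⟨hj', hi', hr⟩
  · rw [h]
  · rw [hr]; simp; omega
  · rw [hr]
    rcases le_total e.1 i with h' | h'
    · rw [min_eq_left h', max_eq_right h']; omega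
    · rw [min_eq_right h', max_eq_left h']; omega

lemma repl_sum_lt (hV : Valid n E) (hij : i < j) (e : ℕ × ℕ) (he : e ∈ E)
    (hne : repl i j e ≠ e) :
    (repl i j e).1 + (repl i j e).2 < e.1 + e.2 := by
  obtain ⟨h1, h2⟩ := hV e he
  rcases repl_eq_or (i := i) (j := j) e with h | ⟨hj', hr⟩ | ⟨hj', hi', hr⟩
  · exact absurd h hne
  · rw [hr]; simp; omega
  · rw [hr]
    rcases le_total e.1 i with h' | h'
    · rw [min_eq_left h', max_eq_right h']; omega
    · rw [min_eq_right h', max_eq_left h']; omega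

lemma shf_wt_lt (hV : Valid n E) (hij : i < j) (hne : shf i j E ≠ E) :
    wt (shf i j E) < wt E := by
  have hex : ∃ e ∈ E, (if repl i j e ∈ E then e else repl i j e) ≠ e := by
    by_contra hc
    push_neg at hc
    apply hne
    apply Finset.Subset.antisymm
    · intro x hx
      obtain ⟨e0, he0, rfl⟩ := Finset.mem_image.mp hx
      rw [hc e0 he0]; exact he0
    · intro x hx
      have hm : (if repl i j x ∈ E then x else repl i j x) ∈ shf i j E :=
        Finset.mem_image_of_mem _ hx
      rwa [hc x hx] at hm
  obtain ⟨e0, he0, hne0⟩ := hex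
  unfold wt shf
  rw [Finset.sum_image (fun x hx y hy h => shf_injOn hV hij hx hy h)]
  apply Finset.sum_lt_sum
  · intro e he
    split
    · exact le_refl _
    · exact repl_sum_le hV hij e he
  · refine ⟨e0, he0, ?_⟩
    have hrE : repl i j e0 ∉ E := by
      intro h; exact hne0 (if_pos h)
    rw [if_neg hrE]
    have : repl i j e0 ≠ e0 := by rw [if_neg hrE] at hne0; exact hne0
    exact repl_sum_lt hV hij e0 he0 this

end shift2

section swap

lemma disj_ne {e f : ℕ × ℕ} (h : Disj e f) : e ≠ f := fun hh => h.1 (by rw [hh])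

lemma symm_disj : Symmetric Disj := fun _ _ => disj_symm

lemma swap_one {M : Finset (ℕ × ℕ)} (hp : (M : Set (ℕ × ℕ)).Pairwise Disj)
    {m0 e0 : ℕ × ℕ} (hm0 : m0 ∈ M) (h : ∀ m ∈ M, m ≠ m0 → Disj e0 m) :
    (insert e0 (M.erase m0)).card = M.card ∧
      ((insert e0 (M.erase m0) : Finset (ℕ × ℕ)) : Set (ℕ × ℕ)).Pairwise Disj := by
  have he0 : e0 ∉ M.erase m0 := by
    intro hc
    obtain ⟨hne, hmem⟩ := Finset.mem_erase.mp hc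
    exact not_disj_self (h e0 hmem hne)
  constructor
  · rw [Finset.card_insert_of_notMem he0, Finset.card_erase_of_mem hm0]
    have := Finset.card_pos.mpr ⟨m0, hm0⟩
    omega
  · rw [Finset.coe_insert]
    rw [(letI : Std.Symm Disj := ⟨symm_disj⟩; Set.pairwise_insert_of_symm)]
    constructor
    · exact hp.mono (by intro x hx; exact Finset.mem_of_mem_erase hx)
    · intro m hm _
      have hm' := Finset.mem_coe.mp hm
      obtain ⟨hne, hmem⟩ := Finset.mem_erase.mp hm'
      exact h m hmem hne

lemma swap_two {M : Finset (ℕ × ℕ)} (hp : (M : Set (ℕ × ℕ)).Pairwise Disj)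
    {m0 m1 e0 e1 : ℕ × ℕ} (hm0 : m0 ∈ M) (hm1 : m1 ∈ M) (hne : m0 ≠ m1)
    (hd01 : Disj e0 e1)
    (h0 : ∀ m ∈ M, m ≠ m0 → m ≠ m1 → Disj e0 m)
    (h1 : ∀ m ∈ M, m ≠ m0 → m ≠ m1 → Disj e1 m) :
    (insert e0 (insert e1 ((M.erase m0).erase m1))).card = M.card ∧
      ((insert e0 (insert e1 ((M.erase m0).erase m1)) : Finset (ℕ × ℕ)) : Set (ℕ × ℕ)).Pairwise Disj := by
  have hbase : ∀ m ∈ (M.erase m0).erase m1, m ≠ m0 ∧ m ≠ m1 ∧ m ∈ M := by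
    intro m hm
    obtain ⟨h1', h2'⟩ := Finset.mem_erase.mp hm
    obtain ⟨h3', h4'⟩ := Finset.mem_erase.mp h2'
    exact ⟨h3', h1', h4'⟩
  have he1 : e1 ∉ (M.erase m0).erase m1 := by
    intro hc
    obtain ⟨a, b, c⟩ := hbase e1 hc
    exact not_disj_self (h1 e1 c a b)
  have he0 : e0 ∉ insert e1 ((M.erase m0).erase m1) := by
    intro hc
    rcases Finset.mem_insert.mp hc with hc | hc
    · exact disj_ne hd01 hc
    · obtain ⟨a, b, c⟩ := hbase e0 hc
      exact not_disj_self (h0 e0 c a b)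
  have hm1' : m1 ∈ M.erase m0 := Finset.mem_erase.mpr ⟨Ne.symm hne, hm1⟩
  constructor
  · rw [Finset.card_insert_of_notMem he0, Finset.card_insert_of_notMem he1,
      Finset.card_erase_of_mem hm1', Finset.card_erase_of_mem hm0]
    have h2 : 2 ≤ M.card := Finset.one_lt_card.mpr ⟨m0, hm0, m1, hm1, hne⟩
    omega
  · rw [Finset.coe_insert, (letI : Std.Symm Disj := ⟨symm_disj⟩; Set.pairwise_insert_of_symm),
      Finset.coe_insert, (letI : Std.Symm Disj := ⟨symm_disj⟩; Set.pairwise_insert_of_symm)]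
    refine ⟨⟨hp.mono ?_, ?_⟩, ?_⟩
    · intro x hx; exact (hbase x hx).2.2
    · intro m hm _
      obtain ⟨a, b, c⟩ := hbase m hm
      exact h1 m c a b
    · intro m hm _
      rcases Set.mem_insert_iff.mp hm with hm' | hm'
      · rw [hm']; exact hd01
      · obtain ⟨a, b, c⟩ := hbase m hm'
        exact h0 m c a b

end swap

section transfer
variable {n i j k : ℕ} {E : Finset (ℕ × ℕ)}

lemma shf_hasM (hV : Valid n E) (hij : i < j) (h : hasM (shf i j E) k) : hasM E k := by
  obtain ⟨M, hME, hcard, hp⟩ := h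
  have hextract : ∀ m ∈ M, m ∉ E → ∃ e0 ∈ E, repl i j e0 = m ∧ repl i j e0 ≠ e0 := by
    intro m hm hmE
    obtain ⟨e0, he0, hfe⟩ := Finset.mem_image.mp (hME hm)
    by_cases hc : repl i j e0 ∈ E
    · rw [if_pos hc] at hfe
      exact absurd (by rw [← hfe]; exact he0) hmE
    · rw [if_neg hc] at hfe
      exact ⟨e0, he0, hfe, fun hh => hc (by rw [hh]; exact he0)⟩
  have hbadi : ∀ m ∈ M, m ∉ E → (m.1 = i ∨ m.2 = i) ∧ m.1 ≠ j ∧ m.2 ≠ j := by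
    intro m hm hmE
    obtain ⟨e0, he0, hfe, hne⟩ := hextract m hm hmE
    have := repl_ne_props hV hij e0 he0 hne
    rw [hfe] at this; exact this
  by_cases hall : ∀ m ∈ M, m ∈ E
  · exact ⟨M, fun x hx => hall x hx, hcard, hp⟩
  push_neg at hall
  obtain ⟨m0, hm0M, hm0E⟩ := hall
  have huniq : ∀ m ∈ M, m ∉ E → m = m0 := by
    intro m hm hmE
    by_contra hne
    have hd : Disj m m0 := hp (Finset.mem_coe.mpr hm) (Finset.mem_coe.mpr hm0M) hne
    have a1 := (hbadi m hm hmE).1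
    have a2 := (hbadi m0 hm0M hm0E).1
    obtain ⟨d1, d2, d3, d4⟩ := hd
    omega
  obtain ⟨e0, he0E, hfe0, hne0⟩ := hextract m0 hm0M hm0E
  obtain ⟨hv0a, hv0b⟩ := hV e0 he0E
  obtain ⟨z, hzi, hzj, hm0z, he0z⟩ :
      ∃ z, z ≠ i ∧ z ≠ j ∧
        ((m0.1 = i ∧ m0.2 = z) ∨ (m0.1 = z ∧ m0.2 = i)) ∧
        ((e0.1 = j ∧ e0.2 = z) ∨ (e0.1 = z ∧ e0.2 = j)) := by
    rcases repl_eq_or (i := i) (j := j) e0 with h | ⟨hj0, hr⟩ | ⟨hj0, hi0, hr⟩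
    · exact absurd h hne0
    · refine ⟨e0.2, by omega, by omega, ?_, Or.inl ⟨hj0, rfl⟩⟩
      left; rw [← hfe0, hr]; exact ⟨rfl, rfl⟩
    · refine ⟨e0.1, hi0, by omega, ?_, Or.inr ⟨rfl, hj0⟩⟩
      rw [← hfe0, hr]
      rcases le_total e0.1 i with h' | h'
      · right; rw [min_eq_left h', max_eq_right h']; exact ⟨rfl, rfl⟩
      · left; rw [min_eq_right h', max_eq_left h']; exact ⟨rfl, rfl⟩
  by_cases hJ : ∃ m ∈ M, m.1 = j ∨ m.2 = j
  · -- case B : j is covered by some matching edge m1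
    obtain ⟨m1, hm1M, hm1j⟩ := hJ
    have hm1m0 : m1 ≠ m0 := by
      intro hh; rw [hh] at hm1j
      rcases hm0z with ⟨b1, b2⟩ | ⟨b1, b2⟩ <;> omega
    have hm1E : m1 ∈ E := by
      by_contra hc
      have := (hbadi m1 hm1M hc).2
      omega
    obtain ⟨hv1a, hv1b⟩ := hV m1 hm1E
    have hdm01 : Disj m0 m1 :=
      hp (Finset.mem_coe.mpr hm0M) (Finset.mem_coe.mpr hm1M) (Ne.symm hm1m0)
    have hi1 : m1.1 ≠ i ∧ m1.2 ≠ i := by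
      obtain ⟨d1, d2, d3, d4⟩ := hdm01
      rcases hm0z with ⟨b1, b2⟩ | ⟨b1, b2⟩ <;> exact ⟨by omega, by omega⟩
    have hrne : repl i j m1 ≠ m1 := repl_ne_of_touch hV hij m1 hm1E hm1j hi1
    have hreplE : repl i j m1 ∈ E := by
      obtain ⟨e1, he1, hfe1⟩ := Finset.mem_image.mp (hME hm1M)
      by_cases hc : repl i j e1 ∈ E
      · rw [if_pos hc] at hfe1; rw [← hfe1]; exact hc
      · rw [if_neg hc] at hfe1
        have hne1 : repl i j e1 ≠ e1 := by
          intro hh; apply hc; rw [hh]; exact he1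
        have := repl_ne_props hV hij e1 he1 hne1
        rw [hfe1] at this
        exfalso; rcases hm1j with hh | hh
        · exact this.2.1 hh
        · exact this.2.2 hh
    obtain ⟨y, hyi, hyj, hm1y, he1y⟩ :
        ∃ y, y ≠ i ∧ y ≠ j ∧
          ((m1.1 = j ∧ m1.2 = y) ∨ (m1.1 = y ∧ m1.2 = j)) ∧
          (((repl i j m1).1 = i ∧ (repl i j m1).2 = y) ∨
            ((repl i j m1).1 = y ∧ (repl i j m1).2 = i)) := by
      rcases repl_eq_or (i := i) (j := j) m1 with h | ⟨hj1, hr⟩ | ⟨hj1, hi1', hr⟩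
      · exact absurd h hrne
      · exact ⟨m1.2, hi1.2, by omega, Or.inl ⟨hj1, rfl⟩, by rw [hr]; exact Or.inl ⟨rfl, rfl⟩⟩
      · refine ⟨m1.1, hi1.1, by omega, Or.inr ⟨rfl, hj1⟩, ?_⟩
        rw [hr]
        rcases le_total m1.1 i with h' | h'
        · right; rw [min_eq_left h', max_eq_right h']; exact ⟨rfl, rfl⟩
        · left; rw [min_eq_right h', max_eq_left h']; exact ⟨rfl, rfl⟩
    have hzy : z ≠ y := by
      obtain ⟨d1, d2, d3, d4⟩ := hdm01
      rcases hm0z with ⟨b1, b2⟩ | ⟨b1, b2⟩ <;> rcases hm1y with ⟨c1, c2⟩ | ⟨c1, c2⟩ <;> omega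
    have hd01 : Disj e0 (repl i j m1) := by
      rcases he0z with ⟨a1, a2⟩ | ⟨a1, a2⟩ <;> rcases he1y with ⟨c1, c2⟩ | ⟨c1, c2⟩ <;>
        exact ⟨by omega, by omega, by omega, by omega⟩
    have hnoj : ∀ m ∈ M, m ≠ m1 → m.1 ≠ j ∧ m.2 ≠ j := by
      intro m hm hne
      have hd : Disj m m1 := hp (Finset.mem_coe.mpr hm) (Finset.mem_coe.mpr hm1M) hne
      obtain ⟨d1, d2, d3, d4⟩ := hd
      rcases hm1y with ⟨c1, c2⟩ | ⟨c1, c2⟩ <;> exact ⟨by omega, by omega⟩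
    have h0 : ∀ m ∈ M, m ≠ m0 → m ≠ m1 → Disj e0 m := by
      intro m hm hnem0 hnem1
      have hd : Disj m0 m := hp (Finset.mem_coe.mpr hm0M) (Finset.mem_coe.mpr hm) (Ne.symm hnem0)
      obtain ⟨d1, d2, d3, d4⟩ := hd
      have hjj := hnoj m hm hnem1
      rcases he0z with ⟨a1, a2⟩ | ⟨a1, a2⟩ <;> rcases hm0z with ⟨b1, b2⟩ | ⟨b1, b2⟩ <;>
        exact ⟨by omega, by omega, by omega, by omega⟩
    have h1 : ∀ m ∈ M, m ≠ m0 → m ≠ m1 → Disj (repl i j m1) m := by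
      intro m hm hnem0 hnem1
      have hd : Disj m0 m := hp (Finset.mem_coe.mpr hm0M) (Finset.mem_coe.mpr hm) (Ne.symm hnem0)
      have hd' : Disj m1 m := hp (Finset.mem_coe.mpr hm1M) (Finset.mem_coe.mpr hm) (Ne.symm hnem1)
      obtain ⟨d1, d2, d3, d4⟩ := hd
      obtain ⟨f1, f2, f3, f4⟩ := hd'
      rcases he1y with ⟨c1, c2⟩ | ⟨c1, c2⟩ <;> rcases hm0z with ⟨b1, b2⟩ | ⟨b1, b2⟩ <;>
        rcases hm1y with ⟨g1, g2⟩ | ⟨g1, g2⟩ <;>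
        exact ⟨by omega, by omega, by omega, by omega⟩
    obtain ⟨hc2, hpw2⟩ := swap_two hp hm0M hm1M (Ne.symm hm1m0) hd01 h0 h1
    refine ⟨insert e0 (insert (repl i j m1) ((M.erase m0).erase m1)), ?_, by rw [hc2, hcard], hpw2⟩
    intro x hx
    rcases Finset.mem_insert.mp hx with rfl | hx
    · exact he0E
    rcases Finset.mem_insert.mp hx with rfl | hx
    · exact hreplE
    obtain ⟨x1, x2⟩ := Finset.mem_erase.mp hx
    obtain ⟨x3, x4⟩ := Finset.mem_erase.mp x2
    by_contra hc
    exact x3 (huniq x x4 hc)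
  · -- case A : j uncovered
    push_neg at hJ
    have hdis : ∀ m ∈ M, m ≠ m0 → Disj e0 m := by
      intro m hm hne
      have hd : Disj m0 m := hp (Finset.mem_coe.mpr hm0M) (Finset.mem_coe.mpr hm) (Ne.symm hne)
      obtain ⟨d1, d2, d3, d4⟩ := hd
      have hj' := hJ m hm
      rcases he0z with ⟨a1, a2⟩ | ⟨a1, a2⟩ <;> rcases hm0z with ⟨b1, b2⟩ | ⟨b1, b2⟩ <;>
        exact ⟨by omega, by omega, by omega, by omega⟩
    obtain ⟨hc1, hpw1⟩ := swap_one hp hm0M hdis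
    refine ⟨insert e0 (M.erase m0), ?_, by rw [hc1, hcard], hpw1⟩
    intro x hx
    rcases Finset.mem_insert.mp hx with rfl | hx
    · exact he0E
    obtain ⟨x1, x2⟩ := Finset.mem_erase.mp hx
    by_contra hc
    exact x1 (huniq x x2 hc)

end transfer

section closure
variable {n : ℕ} {E : Finset (ℕ × ℕ)}

lemma stable_repl (hS : ∀ i j, i < j → shf i j E = E) {i j : ℕ} (hij : i < j)
    {e : ℕ × ℕ} (he : e ∈ E) : repl i j e ∈ E := by
  by_cases hc : repl i j e ∈ E
  · exact hc
  · have hm : (if repl i j e ∈ E then e else repl i j e) ∈ shf i j E :=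
      Finset.mem_image_of_mem _ he
    rw [hS i j hij, if_neg hc] at hm
    exact absurd hm hc

lemma stable_lower_fst (hV : Valid n E) (hS : ∀ i j, i < j → shf i j E = E)
    {e : ℕ × ℕ} (he : e ∈ E) {x : ℕ} (hx : x < e.1) : (x, e.2) ∈ E := by
  have := stable_repl hS hx he
  unfold repl at this
  rwa [if_pos rfl] at this

lemma stable_lower_snd (hV : Valid n E) (hS : ∀ i j, i < j → shf i j E = E)
    {e : ℕ × ℕ} (he : e ∈ E) {k : ℕ} (hk1 : k ≠ e.1) (hk2 : k < e.2) :
    (min e.1 k, max e.1 k) ∈ E := by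
  obtain ⟨hv1, hv2⟩ := hV e he
  have := stable_repl hS hk2 he
  unfold repl at this
  rw [if_neg (by omega : ¬ e.1 = e.2), if_pos ⟨rfl, fun hh => hk1 hh.symm⟩] at this
  exact this

lemma stable_closure (hV : Valid n E) (hS : ∀ i j, i < j → shf i j E = E)
    {e : ℕ × ℕ} (he : e ∈ E) {x y : ℕ} (hx : x ≤ e.1) (hy : y ≤ e.2) (hxy : x < y) :
    (x, y) ∈ E := by
  obtain ⟨hv1, hv2⟩ := hV e he
  rcases eq_or_lt_of_le hy with rfl | hy'
  · rcases eq_or_lt_of_le hx with rfl | hx'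
    · exact (by rw [Prod.mk.eta] at *; exact he)
    · exact stable_lower_fst hV hS he hx'
  · by_cases hye : y = e.1
    · have h' := stable_lower_snd hV hS he (by omega : x ≠ e.1) (by omega : x < e.2)
      rw [min_eq_right (by omega : x ≤ e.1), max_eq_left (by omega : x ≤ e.1)] at h'
      rw [← hye] at h'
      exact h'
    · have h' := stable_lower_snd hV hS he hye hy'
      by_cases hxe : x = e.1
      · rw [min_eq_left (by omega : e.1 ≤ y), max_eq_right (by omega : e.1 ≤ y)] at h'
        rw [← hxe] at h'
        exact h'
      · have hxlt : x < e.1 := by omega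
        rcases lt_or_gt_of_ne hye with hlt | hgt
        · -- y < e.1 : h' = (y, e.1), lower snd by x
          rw [min_eq_right (le_of_lt hlt), max_eq_left (le_of_lt hlt)] at h'
          have h'' := stable_lower_snd (k := x) hV hS h' (by simp; omega) (by simp; omega)
          rwa [min_eq_right (by simp; omega), max_eq_left (by simp; omega)] at h''
        · -- e.1 < y : h' = (e.1, y), lower fst
          rw [min_eq_left (le_of_lt hgt), max_eq_right (le_of_lt hgt)] at h'
          have h'' := stable_lower_fst (x := x) hV hS h' (by simp; omega)
          exact h''

end closure

section counting

def pr (m : ℕ) : Finset (ℕ × ℕ) := (Finset.range m ×ˢ Finset.range m).filter fun e => e.1 < e.2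

lemma pr_mem {m : ℕ} {e : ℕ × ℕ} : e ∈ pr m ↔ e.1 < e.2 ∧ e.2 < m := by
  unfold pr
  simp only [Finset.mem_filter, Finset.mem_product, Finset.mem_range]
  constructor
  · rintro ⟨⟨h1, h2⟩, h3⟩; exact ⟨h3, h2⟩
  · rintro ⟨h1, h2⟩; exact ⟨⟨by omega, h2⟩, h1⟩

lemma pr_card (m : ℕ) : (pr m).card = m.choose 2 := by
  have hb : pr m = (Finset.range m).biUnion
      (fun y => (Finset.range y).image fun x => (x, y)) := by
    ext ⟨x, y⟩
    simp only [pr_mem, Finset.mem_biUnion, Finset.mem_range, Finset.mem_image]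
    constructor
    · rintro ⟨h1, h2⟩; exact ⟨y, h2, x, h1, rfl⟩
    · rintro ⟨y', hy', x', hx', heq⟩
      injection heq with h1 h2
      subst h1; subst h2
      omega
  rw [hb, Finset.card_biUnion]
  · have hc : ∀ y ∈ Finset.range m, ((Finset.range y).image fun x => (x, y)).card = y := by
      intro y _
      rw [Finset.card_image_of_injective _ (fun x1 x2 h => by injection h),
        Finset.card_range]
    rw [Finset.sum_congr rfl hc]
    have h2 := Finset.sum_range_id_mul_two m
    have h3 : m.choose 2 = m * (m - 1) / 2 := Nat.choose_two_right m
    have h4 : 2 ∣ m * (m - 1) := by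
      rcases Nat.even_or_odd m with he | ho
      · exact Dvd.dvd.mul_right he.two_dvd _
      · have hev : Even (m - 1) := by rcases ho with ⟨k, hk⟩; exact ⟨k, by omega⟩
        exact Dvd.dvd.mul_left hev.two_dvd _
    omega
  · intro x hx y hy hxy
    simp only [Finset.disjoint_left, Finset.mem_image]
    rintro a ⟨x1, hx1, rfl⟩ ⟨x2, hx2, heq⟩
    injection heq with h1 h2
    exact hxy h2.symm

lemma choose_two_cast (m : ℕ) : ((m.choose 2 : ℕ) : ℤ) * 2 = (m : ℤ) * ((m : ℤ) - 1) := by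
  have h3 : m.choose 2 = m * (m - 1) / 2 := Nat.choose_two_right m
  have h4 : 2 ∣ m * (m - 1) := by
    rcases Nat.even_or_odd m with he | ho
    · exact Dvd.dvd.mul_right he.two_dvd _
    · have hev : Even (m - 1) := by rcases ho with ⟨k, hk⟩; exact ⟨k, by omega⟩
      exact Dvd.dvd.mul_left hev.two_dvd _
  have h5 : m.choose 2 * 2 = m * (m - 1) := by omega
  have h6 : ((m * (m - 1) : ℕ) : ℤ) = (m : ℤ) * ((m : ℤ) - 1) := by
    rcases Nat.eq_zero_or_pos m with rfl | hm
    · simp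
    · push_cast [Nat.cast_sub hm]; ring
  calc ((m.choose 2 : ℕ) : ℤ) * 2 = ((m.choose 2 * 2 : ℕ) : ℤ) := by push_cast; ring
  _ = ((m * (m - 1) : ℕ) : ℤ) := by rw [h5]
  _ = _ := h6

lemma cardA_sum (m : ℕ) : ∀ r, r ≤ m →
    ((∑ x ∈ Finset.range r, (m - (x + 1)) : ℕ) : ℤ) * 2
      = 2 * r * m - r * r - r := by
  intro r
  induction r with
  | zero => simp
  | succ k ih =>
    intro h
    rw [Finset.sum_range_succ]
    have hk := ih (by omega)
    have hc2 : ((m - (k + 1) : ℕ) : ℤ) = (m : ℤ) - (k + 1) := by omega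
    push_cast
    push_cast at hk
    rw [hc2]
    ring_nf
    ring_nf at hk
    linarith [hk]

lemma cardA (r m : ℕ) (hrm : r ≤ m) :
    (((Finset.range r ×ˢ Finset.range m).filter fun e => e.1 < e.2).card : ℤ) * 2
      = 2 * r * m - r * r - r := by
  have hb : ((Finset.range r ×ˢ Finset.range m).filter fun e => e.1 < e.2) =
      (Finset.range r).biUnion (fun x => (Finset.Ico (x + 1) m).image fun y => (x, y)) := by
    ext ⟨x, y⟩
    simp only [Finset.mem_filter, Finset.mem_product, Finset.mem_range, Finset.mem_biUnion,
      Finset.mem_image, Finset.mem_Ico]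
    constructor
    · rintro ⟨⟨h1, h2⟩, h3⟩; exact ⟨x, h1, y, ⟨by omega, h2⟩, rfl⟩
    · rintro ⟨x', hx', y', ⟨ha, hb⟩, heq⟩
      injection heq with h1 h2
      subst h1; subst h2
      omega
  rw [hb, Finset.card_biUnion]
  · have hcongr : ∀ x ∈ Finset.range r,
        ((Finset.Ico (x + 1) m).image fun y => (x, y)).card = m - (x + 1) := by
      intro x _
      rw [Finset.card_image_of_injective _ (fun y1 y2 h => by injection h),
        Nat.card_Ico]
    rw [Finset.sum_congr rfl hcongr]
    exact cardA_sum m r hrm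
  · intro x hx y hy hxy
    simp only [Finset.disjoint_left, Finset.mem_image]
    rintro a ⟨x1, hx1, rfl⟩ ⟨x2, hx2, heq⟩
    injection heq with h1 h2
    exact hxy h1.symm

end counting

section endgame
variable {a n : ℕ} {E : Finset (ℕ × ℕ)}

lemma stable_bound (hV : Valid n E) (hS : ∀ i j, i < j → shf i j E = E)
    (hM : ¬ hasM E (a + 1)) :
    E.card ≤ max ((2 * a + 1).choose 2) (a * n - a * (a + 1) / 2) := by
  by_cases hn : n ≤ 2 * a + 1
  · have hsub : E ⊆ pr n := fun e he => pr_mem.mpr (hV e he)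
    have h1 : E.card ≤ (pr n).card := Finset.card_le_card hsub
    rw [pr_card] at h1
    exact le_trans (le_trans h1 (Nat.choose_le_choose 2 hn)) (le_max_left _ _)
  push_neg at hn
  have hcanon : ∃ r ≤ a, (r, 2 * a + 1 - r) ∉ E := by
    by_contra hc
    push_neg at hc
    apply hM
    refine ⟨(Finset.range (a + 1)).image (fun r => (r, 2 * a + 1 - r)), ?_, ?_, ?_⟩
    · intro x hx
      obtain ⟨r, hr, rfl⟩ := Finset.mem_image.mp hx
      exact hc r (by simp at hr; omega)
    · rw [Finset.card_image_of_injective _ (fun r1 r2 h => by injection h),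
        Finset.card_range]
    · intro x hx y hy hxy
      obtain ⟨r, hr, rfl⟩ := Finset.mem_coe.mp hx |> Finset.mem_image.mp
      obtain ⟨r', hr', rfl⟩ := Finset.mem_coe.mp hy |> Finset.mem_image.mp
      simp only [Finset.mem_range] at hr hr'
      have hrr : r ≠ r' := fun hh => hxy (by rw [hh])
      exact ⟨by simpa using hrr, by simp; omega, by simp; omega, by simp; omega⟩
  obtain ⟨r, hra, hrE⟩ := hcanon
  have hkey : ∀ e ∈ E, e.1 < r ∨ e.2 < 2 * a + 1 - r := by
    intro e he
    by_contra hc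
    push_neg at hc
    exact hrE (stable_closure hV hS he hc.1 hc.2 (by omega))
  set A := ((Finset.range r ×ˢ Finset.range n).filter fun e => e.1 < e.2) with hA
  set B := ((Finset.Ico r (2 * a + 1 - r) ×ˢ Finset.Ico r (2 * a + 1 - r)).filter
      fun e => e.1 < e.2) with hB
  have hsub : E ⊆ A ∪ B := by
    intro e he
    obtain ⟨hv1, hv2⟩ := hV e he
    by_cases hcase : e.1 < r
    · apply Finset.mem_union_left
      rw [hA]
      simp only [Finset.mem_filter, Finset.mem_product, Finset.mem_range]
      exact ⟨⟨hcase, hv2⟩, hv1⟩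
    · push_neg at hcase
      have h2 : e.2 < 2 * a + 1 - r := by
        rcases hkey e he with h | h
        · omega
        · exact h
      apply Finset.mem_union_right
      rw [hB]
      simp only [Finset.mem_filter, Finset.mem_product, Finset.mem_Ico]
      exact ⟨⟨⟨hcase, by omega⟩, ⟨by omega, h2⟩⟩, hv1⟩
  have hcardE : E.card ≤ A.card + B.card :=
    le_trans (Finset.card_le_card hsub) (Finset.card_union_le _ _)
  -- bound card B
  have hBbound : B.card ≤ (2 * a + 1 - 2 * r).choose 2 := by
    rw [← pr_card]
    apply Finset.card_le_card_of_injOn (fun e => (e.1 - r, e.2 - r))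
    · intro e he
      rw [hB] at he
      simp only [Finset.mem_coe, Finset.mem_filter, Finset.mem_product, Finset.mem_Ico] at he
      obtain ⟨⟨⟨h1, h2⟩, h3, h4⟩, h5⟩ := he
      apply pr_mem.mpr
      constructor
      · show e.1 - r < e.2 - r
        omega
      · show e.2 - r < 2 * a + 1 - 2 * r
        omega
    · intro e1 he1 e2 he2 heq
      rw [hB] at he1 he2
      simp only [Finset.coe_filter, Set.mem_setOf_eq, Finset.mem_product,
        Finset.mem_Ico] at he1 he2
      injection heq with q1 q2
      have := he1.1
      have := he2.1
      apply Prod.ext <;> omega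
  -- bound card A
  have hrn : r ≤ n := by omega
  have hAc := cardA r n hrn
  rw [← hA] at hAc
  -- pass to integers
  have hT1 : (((2 * a + 1).choose 2 : ℕ) : ℤ) * 2 = (2 * (a : ℤ) + 1) * (2 * a) := by
    have := choose_two_cast (2 * a + 1)
    push_cast at this ⊢
    linarith [this]
  have hBc : ((B.card : ℕ) : ℤ) * 2 ≤ (2 * (a : ℤ) + 1 - 2 * r) * (2 * a - 2 * r) := by
    have hcast := choose_two_cast (2 * a + 1 - 2 * r)
    have hc1 : ((2 * a + 1 - 2 * r : ℕ) : ℤ) = 2 * (a : ℤ) + 1 - 2 * r := by omega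
    rw [hc1] at hcast
    have hle : ((B.card : ℕ) : ℤ) ≤ (((2 * a + 1 - 2 * r).choose 2 : ℕ) : ℤ) := by
      exact_mod_cast hBbound
    have : (2 * (a:ℤ) + 1 - 2*r) * (2 * (a:ℤ) + 1 - 2*r - 1) = (2 * (a:ℤ) + 1 - 2 * r) * (2 * a - 2 * r) := by ring
    nlinarith [hle, hcast]
  have hg : ((E.card : ℕ) : ℤ) * 2 ≤ (2 * (r:ℤ) * n - r * r - r) + (2 * (a : ℤ) + 1 - 2 * r) * (2 * a - 2 * r) := by
    have h1 : ((E.card : ℕ) : ℤ) ≤ (A.card : ℤ) + (B.card : ℤ) := by exact_mod_cast hcardE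
    linarith [hAc, hBc]
  -- case split on which bound wins
  by_cases hcase : 3 * r + 2 * n ≤ 8 * a + 3
  · -- bound by T1
    refine le_trans ?_ (le_max_left _ _)
    have hfin : ((E.card : ℕ) : ℤ) * 2 ≤ (((2 * a + 1).choose 2 : ℕ) : ℤ) * 2 := by
      rw [hT1]
      have hr0 : (0 : ℤ) ≤ r := by positivity
      have hfac : 3 * (r : ℤ) + 2 * n - 8 * a - 3 ≤ 0 := by
        have : (3 * r + 2 * n : ℕ) ≤ 8 * a + 3 := hcase
        push_cast at this ⊢
        omega
      nlinarith [hg, mul_nonpos_of_nonneg_of_nonpos hr0 hfac]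
    have : ((E.card : ℕ) : ℤ) ≤ (((2 * a + 1).choose 2 : ℕ) : ℤ) := by linarith
    exact_mod_cast this
  · -- bound by T2
    push_neg at hcase
    refine le_trans ?_ (le_max_right _ _)
    have hdiv : a * (a + 1) / 2 * 2 = a * (a + 1) := by
      have : 2 ∣ a * (a + 1) := by
        rcases Nat.even_or_odd a with he | ho
        · exact Dvd.dvd.mul_right he.two_dvd _
        · have hev : Even (a + 1) := by rcases ho with ⟨k, hk⟩; exact ⟨k + 1, by omega⟩
          exact Dvd.dvd.mul_left hev.two_dvd _
      omega
    have hle2 : a * (a + 1) / 2 ≤ a * n := by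
      have : a * (a + 1) ≤ a * n * 2 := by
        have h1 : a + 1 ≤ n := by omega
        calc a * (a + 1) ≤ a * n := Nat.mul_le_mul_left a h1
        _ ≤ a * n * 2 := by omega
      omega
    have hkey2 : ∀ s t : ℕ, 2 ∣ t → t / 2 ≤ s → ((s - t / 2 : ℕ) : ℤ) * 2 = 2 * (s : ℤ) - t := by
      intro s t h1 h2
      omega
    have hT2 : ((a * n - a * (a + 1) / 2 : ℕ) : ℤ) * 2 = 2 * (a : ℤ) * n - a * (a + 1) := by
      have hdvd : 2 ∣ a * (a + 1) := by
        rcases Nat.even_or_odd a with he | ho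
        · exact Dvd.dvd.mul_right he.two_dvd _
        · have hev : Even (a + 1) := by rcases ho with ⟨k, hk⟩; exact ⟨k + 1, by omega⟩
          exact Dvd.dvd.mul_left hev.two_dvd _
      have h1 := hkey2 (a * n) (a * (a + 1)) hdvd hle2
      rw [h1]
      push_cast
      ring
    have hfin : ((E.card : ℕ) : ℤ) * 2 ≤ ((a * n - a * (a + 1) / 2 : ℕ) : ℤ) * 2 := by
      rw [hT2]
      have hfac : (1 : ℤ) ≤ 3 * (r : ℤ) + 2 * n - 8 * a - 3 := by
        have : 8 * a + 3 < 3 * r + 2 * n := hcase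
        push_cast
        omega
      have har : (0 : ℤ) ≤ (a : ℤ) - r := by
        have : (r : ℤ) ≤ a := by exact_mod_cast hra
        linarith
      nlinarith [hg, mul_nonneg har (by linarith : (0:ℤ) ≤ 3 * (r : ℤ) + 2 * n - 5 * a - 3)]
    have : ((E.card : ℕ) : ℤ) ≤ ((a * n - a * (a + 1) / 2 : ℕ) : ℤ) := by linarith
    exact_mod_cast this

end endgame

section main
lemma main_bound (a : ℕ) : ∀ (W n : ℕ) (E : Finset (ℕ × ℕ)), wt E ≤ W → Valid n E →
    ¬ hasM E (a + 1) →
    E.card ≤ max ((2 * a + 1).choose 2) (a * n - a * (a + 1) / 2) := by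
  intro W
  induction W using Nat.strong_induction_on with
  | _ W ih =>
    intro n E hw hV hM
    by_cases hS : ∀ i j, i < j → shf i j E = E
    · exact stable_bound hV hS hM
    · push_neg at hS
      obtain ⟨i, j, hij, hne⟩ := hS
      have h1 : wt (shf i j E) < wt E := shf_wt_lt hV hij hne
      have h2 := ih (wt (shf i j E)) (by omega) n (shf i j E) le_rfl
        (shf_valid hV hij) (fun hh => hM (shf_hasM hV hij hh))
      calc E.card = (shf i j E).card := (shf_card hV hij).symm
      _ ≤ _ := h2

end main

end EGproof

theorem stmt6' {n a : ℕ} (G : SimpleGraph (Fin n))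
    (hnomatch : ¬ HasMatching G (a + 1)) :
    G.edgeSet.ncard ≤ max (Nat.choose (2 * a + 1) 2) (a * n - a * (a + 1) / 2) := by
  classical
  set P : Finset (Fin n × Fin n) :=
    Finset.univ.filter (fun e : Fin n × Fin n => G.Adj e.1 e.2 ∧ e.1 < e.2) with hP
  set E : Finset (ℕ × ℕ) := P.image (fun e => ((e.1 : ℕ), (e.2 : ℕ))) with hE
  have hinj : Set.InjOn (fun e : Fin n × Fin n => ((e.1 : ℕ), (e.2 : ℕ))) P := by
    intro x hx y hy h
    injection h with h1 h2
    exact Prod.ext (Fin.val_injective h1) (Fin.val_injective h2)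
  have hcardPE : E.card = P.card := Finset.card_image_of_injOn hinj
  have hmemP : ∀ e : Fin n × Fin n, e ∈ P ↔ G.Adj e.1 e.2 ∧ e.1 < e.2 := by
    intro e
    rw [hP]
    simp
  have hcard : G.edgeSet.ncard = P.card := by
    rw [Set.ncard_eq_toFinset_card']
    have : G.edgeSet.toFinset = G.edgeFinset := rfl
    rw [this]
    symm
    apply Finset.card_bij (fun e _ => s(e.1, e.2))
    · intro e he
      rw [SimpleGraph.mem_edgeFinset, SimpleGraph.mem_edgeSet]
      exact ((hmemP e).mp he).1
    · intro e1 he1 e2 he2 heq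
      rw [Sym2.eq_iff] at heq
      have h1 := ((hmemP e1).mp he1).2
      have h2 := ((hmemP e2).mp he2).2
      rcases heq with ⟨ha, hb⟩ | ⟨ha, hb⟩
      · exact Prod.ext ha hb
      · exfalso
        rw [← ha, ← hb] at h2
        exact absurd (h1.trans h2) (lt_irrefl _)
    · intro ed hed
      rw [SimpleGraph.mem_edgeFinset] at hed
      induction ed with
      | _ u v =>
        rw [SimpleGraph.mem_edgeSet] at hed
        rcases lt_trichotomy u v with h | h | h
        · exact ⟨(u, v), (hmemP _).mpr ⟨hed, h⟩, rfl⟩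
        · exact absurd h (G.ne_of_adj hed)
        · exact ⟨(v, u), (hmemP _).mpr ⟨hed.symm, h⟩, Sym2.eq_swap⟩
  have hValid : EGproof.Valid n E := by
    intro e he
    rw [hE] at he
    obtain ⟨q, hq, rfl⟩ := Finset.mem_image.mp he
    have := ((hmemP q).mp hq).2
    exact ⟨by exact_mod_cast this, q.2.isLt⟩
  have hNoM : ¬ EGproof.hasM E (a + 1) := by
    intro hm
    apply hnomatch
    obtain ⟨M, hME, hMc, hMp⟩ := hm
    have g := (Finset.equivFinOfCardEq hMc).symm
    have hex : ∀ i : Fin (a + 1), ∃ q : Fin n × Fin n,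
        G.Adj q.1 q.2 ∧ ((q.1 : ℕ), (q.2 : ℕ)) = ((g i : ℕ × ℕ)) := by
      intro i
      have hm' : ((g i : ℕ × ℕ)) ∈ E := hME (g i).2
      rw [hE] at hm'
      obtain ⟨q, hq, hco⟩ := Finset.mem_image.mp hm'
      exact ⟨q, ((hmemP q).mp hq).1, hco⟩
    choose p hp1 hp2 using hex
    refine ⟨p, hp1, ?_⟩
    intro i j hij
    have hgij : (g i : ℕ × ℕ) ≠ (g j : ℕ × ℕ) := by
      intro hh
      exact hij (g.injective (Subtype.ext hh))
    have hd : EGproof.Disj (g i : ℕ × ℕ) (g j : ℕ × ℕ) :=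
      hMp (Finset.mem_coe.mpr (g i).2) (Finset.mem_coe.mpr (g j).2) hgij
    obtain ⟨d1, d2, d3, d4⟩ := hd
    have e1 := Prod.ext_iff.mp (hp2 i)
    have e2 := Prod.ext_iff.mp (hp2 j)
    simp only at e1 e2
    refine ⟨?_, ?_, ?_, ?_⟩ <;> intro hh <;> apply_fun (Fin.val) at hh <;> omega
  have := EGproof.main_bound a (EGproof.wt E) n E le_rfl hValid hNoM
  rw [hcard, ← hcardPE]
  exact this



/-- if `α ≥ 1`, `n ≥ 2α + 1` and `G` has `n` vertices and matching number `α`,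
then `e(G) ≤ max{C(2α+1,2), αn - α(α+1)/2}`. -/
theorem stmt6 {n a : ℕ} (ha : 1 ≤ a) (hn : 2 * a + 1 ≤ n) (G : SimpleGraph (Fin n))
    (hmatch : HasMatching G a) (hnomatch : ¬ HasMatching G (a + 1)) :
    G.edgeSet.ncard ≤ max (Nat.choose (2 * a + 1) 2) (a * n - a * (a + 1) / 2) := by
  exact stmt6' G hnomatch

end
end

section
/- Let k ≥ 2 and n ≥ (5k - 2)/2. If G is a graph on n vertices containing no matching of size k (i.e., G is kK_2-free), then e(G) ≤ (k-1)n - k(k-1)/2. -/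
open Matrix

noncomputable section
open scoped Classical

namespace EG

lemma hm_zero {V : Type*} (G : SimpleGraph V) : HasMatching G 0 :=
  ⟨fun i => i.elim0, fun i => i.elim0, fun i => i.elim0⟩

lemma hm_extend {V : Type*} {G : SimpleGraph V} {s : ℕ} {p : Fin s → V × V}
    (hadj : ∀ i, G.Adj (p i).1 (p i).2)
    (hdisj : ∀ i j, i ≠ j → (p i).1 ≠ (p j).1 ∧ (p i).1 ≠ (p j).2 ∧
      (p i).2 ≠ (p j).1 ∧ (p i).2 ≠ (p j).2)
    {a b : V} (hab : G.Adj a b)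
    (ha : ∀ i, a ≠ (p i).1 ∧ a ≠ (p i).2) (hb : ∀ i, b ≠ (p i).1 ∧ b ≠ (p i).2) :
    HasMatching G (s + 1) := by
  refine ⟨Fin.snoc p (a, b), ?_, ?_⟩
  · intro i
    induction i using Fin.lastCases with
    | last => simp [Fin.snoc_last]; exact hab
    | cast i => simpa [Fin.snoc_castSucc] using hadj i
  · intro i j hij
    induction i using Fin.lastCases with
    | last =>
      induction j using Fin.lastCases with
      | last => exact absurd rfl hij
      | cast j =>
        simp only [Fin.snoc_last, Fin.snoc_castSucc]
        exact ⟨(ha j).1, (ha j).2, (hb j).1, (hb j).2⟩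
    | cast i =>
      induction j using Fin.lastCases with
      | last =>
        simp only [Fin.snoc_last, Fin.snoc_castSucc]
        exact ⟨((ha i).1).symm, ((hb i).1).symm, ((ha i).2).symm, ((hb i).2).symm⟩
      | cast j =>
        simp only [Fin.snoc_castSucc]
        exact hdisj i j (fun e => hij (by rw [e]))

lemma hm_swap {V : Type*} {G : SimpleGraph V} {s : ℕ} {p : Fin s → V × V}
    (hadj : ∀ i, G.Adj (p i).1 (p i).2)
    (hdisj : ∀ i j, i ≠ j → (p i).1 ≠ (p j).1 ∧ (p i).1 ≠ (p j).2 ∧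
      (p i).2 ≠ (p j).1 ∧ (p i).2 ≠ (p j).2)
    (i : Fin s) {w1 w2 : V} (hw : w1 ≠ w2)
    (h1 : G.Adj (p i).1 w1) (h2 : G.Adj (p i).2 w2)
    (hw1 : ∀ j, w1 ≠ (p j).1 ∧ w1 ≠ (p j).2) (hw2 : ∀ j, w2 ≠ (p j).1 ∧ w2 ≠ (p j).2) :
    HasMatching G (s + 1) := by
  set q : Fin s → V × V := Function.update p i ((p i).1, w1) with hq
  have hqi : q i = ((p i).1, w1) := Function.update_self i _ p
  have hqj : ∀ j, j ≠ i → q j = p j := fun j hj => Function.update_of_ne hj _ p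
  have hadjq : ∀ j, G.Adj (q j).1 (q j).2 := by
    intro j
    by_cases hji : j = i
    · rw [hji, hqi]; exact h1
    · rw [hqj j hji]; exact hadj j
  have hdisjq : ∀ j l, j ≠ l → (q j).1 ≠ (q l).1 ∧ (q j).1 ≠ (q l).2 ∧
      (q j).2 ≠ (q l).1 ∧ (q j).2 ≠ (q l).2 := by
    intro j l hjl
    by_cases hji : j = i
    · have hli : l ≠ i := fun e => hjl (hji.trans e.symm)
      rw [hji, hqi, hqj l hli]
      obtain ⟨a, b, c, d⟩ := hdisj i l (fun e => hli e.symm)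
      exact ⟨a, b, (hw1 l).1, (hw1 l).2⟩
    · by_cases hli : l = i
      · rw [hli, hqi, hqj j hji]
        obtain ⟨a, b, c, d⟩ := hdisj j i hji
        exact ⟨a, ((hw1 j).1).symm, c, ((hw1 j).2).symm⟩
      · rw [hqj j hji, hqj l hli]; exact hdisj j l hjl
  refine hm_extend hadjq hdisjq (a := (p i).2) (b := w2) h2 ?_ ?_
  · intro j
    by_cases hji : j = i
    · rw [hji, hqi]
      exact ⟨(G.ne_of_adj (hadj i)).symm, fun e => (hw1 i).2 e.symm⟩
    · rw [hqj j hji]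
      obtain ⟨a, b, c, d⟩ := hdisj i j (fun e => hji e.symm)
      exact ⟨c, d⟩
  · intro j
    by_cases hji : j = i
    · rw [hji, hqi]
      exact ⟨(hw2 i).1, fun e => hw e.symm⟩
    · rw [hqj j hji]; exact hw2 j

lemma main (k : ℕ) : ∀ (V : Type) [Fintype V] (G : SimpleGraph V),
    ¬ HasMatching G k → 5 * k ≤ 2 * Fintype.card V + 2 →
    2 * G.edgeFinset.card + k * (k - 1) ≤ 2 * (k - 1) * Fintype.card V := by
  induction k with
  | zero => exact fun V _ G hfree _ => absurd (hm_zero G) hfree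
  | succ k' ih =>
    intro V _ G hfree hcard
    set n := Fintype.card V with hn
    -- k = 1 : no edges
    by_cases hk0 : k' = 0
    · subst hk0
      have he : G.edgeFinset.card = 0 := by
        rw [Finset.card_eq_zero]
        by_contra hne
        obtain ⟨e, he⟩ := Finset.nonempty_iff_ne_empty.mpr hne
        revert he
        refine Sym2.ind (fun a b => ?_) e
        intro hab
        rw [SimpleGraph.mem_edgeFinset, SimpleGraph.mem_edgeSet] at hab
        exact hfree ⟨fun _ => (a, b), fun _ => hab,
          fun i j hij => absurd (Fin.ext (by omega)) hij⟩
      simp [he]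
    have hk1 : 1 ≤ k' := Nat.one_le_iff_ne_zero.mpr hk0
    have hn4 : 4 ≤ n := by omega
    by_cases hA : ∃ u v, G.Adj u v ∧ G.degree u + G.degree v + 1 ≤ n + k'
    -- CASE A
    · obtain ⟨u, v, huv, hdeg⟩ := hA
      have hune : u ≠ v := G.ne_of_adj huv
      set s' : Set V := {x | x ≠ u ∧ x ≠ v} with hs'
      have hcardV' : Fintype.card ↥s' = n - 2 := by
        rw [← Set.toFinset_card]
        have he : s'.toFinset = Finset.univ \ {u, v} := by
          ext x; simp [hs', not_or]
        rw [he, Finset.card_sdiff_of_subset (Finset.subset_univ _), Finset.card_pair hune,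
          Finset.card_univ]
      set G' := G.induce s' with hG'
      have hfree' : ¬ HasMatching G' k' := by
        rintro ⟨p', h1, h2⟩
        set q : Fin k' → V × V := fun i => (((p' i).1 : V), ((p' i).2 : V)) with hqdef
        have hadjq : ∀ i, G.Adj (q i).1 (q i).2 := fun i => h1 i
        have hdisjq : ∀ i j, i ≠ j → (q i).1 ≠ (q j).1 ∧ (q i).1 ≠ (q j).2 ∧
            (q i).2 ≠ (q j).1 ∧ (q i).2 ≠ (q j).2 := by
          intro i j hij
          obtain ⟨a, b, c, d⟩ := h2 i j hij
          refine ⟨fun e => a (Subtype.val_injective e), fun e => b (Subtype.val_injective e),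
            fun e => c (Subtype.val_injective e), fun e => d (Subtype.val_injective e)⟩
        refine hfree (hm_extend hadjq hdisjq (a := u) (b := v) huv ?_ ?_)
        · exact fun i => ⟨fun e => ((p' i).1).2.1 e.symm, fun e => ((p' i).2).2.1 e.symm⟩
        · exact fun i => ⟨fun e => ((p' i).1).2.2 e.symm, fun e => ((p' i).2).2.2 e.symm⟩
      have hcard' : 5 * k' ≤ 2 * Fintype.card ↥s' + 2 := by rw [hcardV']; omega
      have IH := ih ↥s' G' hfree' hcard'
      rw [hcardV'] at IH
      -- edge counting
      set E1 : Finset (Sym2 V) := G.edgeFinset.filter (fun e => u ∈ e ∨ v ∈ e) with hE1def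
      set E0 : Finset (Sym2 V) := G.edgeFinset.filter (fun e => ¬(u ∈ e ∨ v ∈ e)) with hE0def
      have hsplit : E1.card + E0.card = G.edgeFinset.card :=
        Finset.card_filter_add_card_filter_not _
      have hE1 : E1.card + 1 ≤ G.degree u + G.degree v := by
        have hsub : E1 ⊆ G.incidenceFinset u ∪ G.incidenceFinset v := by
          intro e he
          rw [hE1def, Finset.mem_filter] at he
          rw [Finset.mem_union, SimpleGraph.mem_incidenceFinset, SimpleGraph.mem_incidenceFinset]
          rcases he.2 with h | h
          · exact Or.inl ⟨SimpleGraph.mem_edgeFinset.mp he.1, h⟩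
          · exact Or.inr ⟨SimpleGraph.mem_edgeFinset.mp he.1, h⟩
        have h1 : E1.card ≤ (G.incidenceFinset u ∪ G.incidenceFinset v).card :=
          Finset.card_le_card hsub
        have h2 : (G.incidenceFinset u ∪ G.incidenceFinset v).card
            + (G.incidenceFinset u ∩ G.incidenceFinset v).card
            = G.degree u + G.degree v := by
          rw [Finset.card_union_add_card_inter, G.card_incidenceFinset_eq_degree,
            G.card_incidenceFinset_eq_degree]
        have h3 : s(u, v) ∈ G.incidenceFinset u ∩ G.incidenceFinset v := by
          rw [Finset.mem_inter, SimpleGraph.mem_incidenceFinset, SimpleGraph.mem_incidenceFinset]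
          exact ⟨⟨G.mem_edgeSet.mpr huv, Sym2.mem_mk_left u v⟩,
            ⟨G.mem_edgeSet.mpr huv, Sym2.mem_mk_right u v⟩⟩
        have h4 : 1 ≤ (G.incidenceFinset u ∩ G.incidenceFinset v).card :=
          Finset.card_pos.mpr ⟨_, h3⟩
        omega
      have hE0 : E0.card ≤ G'.edgeFinset.card := by
        have hsub : E0 ⊆ G'.edgeFinset.image (Sym2.map (Subtype.val)) := by
          intro e
          refine Sym2.ind (fun a b => ?_) e
          intro he
          rw [hE0def, Finset.mem_filter, SimpleGraph.mem_edgeFinset, SimpleGraph.mem_edgeSet,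
            not_or, Sym2.mem_iff, Sym2.mem_iff] at he
          obtain ⟨hab, hu, hv⟩ := he
          push_neg at hu hv
          have hma : a ∈ s' := ⟨fun e => hu.1 e.symm, fun e => hv.1 e.symm⟩
          have hmb : b ∈ s' := ⟨fun e => hu.2 e.symm, fun e => hv.2 e.symm⟩
          rw [Finset.mem_image]
          refine ⟨s((⟨a, hma⟩ : ↥s'), (⟨b, hmb⟩ : ↥s')), ?_, rfl⟩
          rw [SimpleGraph.mem_edgeFinset, SimpleGraph.mem_edgeSet]
          exact hab
        calc E0.card ≤ (G'.edgeFinset.image (Sym2.map (Subtype.val))).card :=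
              Finset.card_le_card hsub
          _ ≤ G'.edgeFinset.card := Finset.card_image_le
      -- arithmetic
      simp only [Nat.add_sub_cancel] at IH ⊢
      zify [show (1:ℕ) ≤ k' from hk1, show (2:ℕ) ≤ n by omega] at IH
      zify at hsplit hE1 hE0 hdeg ⊢
      obtain ⟨c, hc1, hc2⟩ : ∃ c : ℤ, (E0.card : ℤ) ≤ c ∧
          2 * c + (k' : ℤ) * ((k' : ℤ) - 1) ≤ 2 * ((k' : ℤ) - 1) * ((n : ℤ) - 2) :=
        ⟨_, hE0, by
          convert IH using 4
          · rfl
          · congr⟩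
      linear_combination -2 * hsplit + 2 * hE1 + 2 * hc1 + 2 * hdeg + hc2
    -- CASE B
    · push_neg at hA
      have hB : ∀ u v, G.Adj u v → n + k' ≤ G.degree u + G.degree v := by
        intro u v h
        have := hA u v h
        omega
      have hdegmin : ∀ w z, G.Adj w z → k' + 1 ≤ G.degree w := by
        intro w z h
        have h1 := hB w z h
        have h2 : G.degree z < n := SimpleGraph.degree_lt_card_verts (G := G) z
        omega
      -- maximal matching size s
      have hfind : ∃ m, ¬ HasMatching G m := ⟨k' + 1, hfree⟩
      have ht0 : ¬ HasMatching G (Nat.find hfind) := Nat.find_spec hfind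
      have htpos : Nat.find hfind ≠ 0 := fun e => ht0 (e ▸ hm_zero G)
      obtain ⟨s, hts⟩ : ∃ s, Nat.find hfind = s + 1 := ⟨Nat.find hfind - 1, by omega⟩
      have ht : ¬ HasMatching G (s + 1) := hts ▸ ht0
      have hs : HasMatching G s := by
        have := Nat.find_min hfind (m := s) (by omega)
        exact of_not_not this
      have hsk : s ≤ k' := by
        have : Nat.find hfind ≤ k' + 1 := Nat.find_min' hfind hfree
        omega
      obtain ⟨p, hadj, hdisj⟩ := hs
      set U : Finset V := Finset.univ.biUnion (fun i => {(p i).1, (p i).2}) with hUdef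
      have hUmem : ∀ x, x ∈ U ↔ ∃ i, x = (p i).1 ∨ x = (p i).2 := by
        intro x; rw [hUdef]; simp [Finset.mem_biUnion]
      have hUcard : U.card ≤ 2 * s := by
        calc U.card ≤ ∑ i : Fin s, ({(p i).1, (p i).2} : Finset V).card :=
              Finset.card_biUnion_le
          _ ≤ ∑ i : Fin s, 2 := by
              refine Finset.sum_le_sum (fun i _ => ?_)
              exact le_trans (Finset.card_insert_le _ _) (by simp)
          _ = 2 * s := by simp [mul_comm]
      have hnotU : ∀ x, x ∉ U → ∀ i, x ≠ (p i).1 ∧ x ≠ (p i).2 := by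
        intro x hx i
        constructor <;> (intro e; exact hx ((hUmem x).mpr ⟨i, by rw [e]; tauto⟩))
      have hnbrU : ∀ w, w ∉ U → ∀ z, G.Adj w z → z ∈ U := by
        intro w hw z hz
        by_contra hzU
        exact ht (hm_extend hadj hdisj hz (hnotU w hw) (hnotU z hzU))
      set W : Finset V := Finset.univ.filter (fun w => w ∉ U ∧ ∃ z, G.Adj w z) with hWdef
      have hWmem : ∀ w, w ∈ W ↔ (w ∉ U ∧ ∃ z, G.Adj w z) := by
        intro w; rw [hWdef]; simp
      -- W has at most one element
      have hWcard : W.card ≤ 1 := by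
        by_contra hW2'
        have hW2 : 2 ≤ W.card := by omega
        have key : ∀ i : Fin s,
            (W.filter (fun w => G.Adj (p i).1 w)).card
            + (W.filter (fun w => G.Adj (p i).2 w)).card ≤ W.card := by
          intro i
          by_contra hgt
          set A := W.filter (fun w => G.Adj (p i).1 w) with hAdef
          set B := W.filter (fun w => G.Adj (p i).2 w) with hBdef
          have hAW : A ⊆ W := Finset.filter_subset _ _
          have hBW : B ⊆ W := Finset.filter_subset _ _
          have hAc : A.card ≤ W.card := Finset.card_le_card hAW
          have hBc : B.card ≤ W.card := Finset.card_le_card hBW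
          have hA1 : 1 ≤ A.card := by omega
          have hB1 : 1 ≤ B.card := by omega
          obtain ⟨w2, hw2⟩ := Finset.card_pos.mp (by omega : 0 < B.card)
          have hw2B := hw2
          rw [hBdef, Finset.mem_filter] at hw2
          have hw2W : w2 ∈ W := hw2.1
          have hw2U : w2 ∉ U := ((hWmem w2).mp hw2W).1
          by_cases hex : ∃ w1 ∈ A, w1 ≠ w2
          · obtain ⟨w1, hw1A, hne⟩ := hex
            rw [hAdef, Finset.mem_filter] at hw1A
            have hw1U : w1 ∉ U := ((hWmem w1).mp hw1A.1).1
            exact ht (hm_swap hadj hdisj i hne hw1A.2 hw2.2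
              (hnotU w1 hw1U) (hnotU w2 hw2U))
          · push_neg at hex
            have hAsub : A ⊆ {w2} := fun x hx => Finset.mem_singleton.mpr (hex x hx)
            have hAcard1 : A.card ≤ 1 := le_trans (Finset.card_le_card hAsub) (by simp)
            have hBbig : 2 ≤ B.card := by omega
            obtain ⟨w1, hw1B, hne⟩ := Finset.exists_mem_ne
              (show 1 < B.card by omega) w2
            have hw2A : w2 ∈ A := by
              obtain ⟨x, hx⟩ := Finset.card_pos.mp (by omega : 0 < A.card)
              have := hex x hx
              rwa [this] at hx
            rw [hAdef, Finset.mem_filter] at hw2A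
            rw [hBdef, Finset.mem_filter] at hw1B
            have hw1U : w1 ∉ U := ((hWmem w1).mp hw1B.1).1
            exact ht (hm_swap hadj hdisj i (hne : w1 ≠ w2).symm hw2A.2 hw1B.2
              (hnotU w2 hw2U) (hnotU w1 hw1U))
        -- counting contradiction
        have hdegW : ∀ w ∈ W, k' + 1 ≤ (G.neighborFinset w).card := by
          intro w hw
          obtain ⟨z, hz⟩ := ((hWmem w).mp hw).2
          exact hdegmin w z hz
        have hNsub : ∀ w ∈ W, G.neighborFinset w ⊆ U := by
          intro w hw z hz
          rw [SimpleGraph.mem_neighborFinset] at hz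
          exact hnbrU w ((hWmem w).mp hw).1 z hz
        have step1 : (k' + 1) * W.card ≤ ∑ w ∈ W, (G.neighborFinset w).card := by
          rw [mul_comm]
          exact Finset.card_nsmul_le_sum W _ _ hdegW
        have step2 : ∀ w ∈ W, (G.neighborFinset w).card
            ≤ ∑ i : Fin s, (({(p i).1, (p i).2} : Finset V) ∩ G.neighborFinset w).card := by
          intro w hw
          calc (G.neighborFinset w).card
              = ((Finset.univ.biUnion fun i => ({(p i).1, (p i).2} : Finset V))
                  ∩ G.neighborFinset w).card := by
                rw [← hUdef, Finset.inter_eq_right.mpr (hNsub w hw)]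
            _ = ((Finset.univ : Finset (Fin s)).biUnion
                  fun i => ({(p i).1, (p i).2} : Finset V) ∩ G.neighborFinset w).card := by
                rw [Finset.biUnion_inter]
            _ ≤ ∑ i : Fin s, (({(p i).1, (p i).2} : Finset V) ∩ G.neighborFinset w).card :=
                Finset.card_biUnion_le
        have step3 : ∑ w ∈ W, (G.neighborFinset w).card
            ≤ ∑ i : Fin s, ∑ w ∈ W, (({(p i).1, (p i).2} : Finset V) ∩ G.neighborFinset w).card := by
          rw [Finset.sum_comm]
          exact Finset.sum_le_sum step2
        have step4 : ∀ i : Fin s, ∑ w ∈ W, (({(p i).1, (p i).2} : Finset V) ∩ G.neighborFinset w).card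
            ≤ W.card := by
          intro i
          have hxy : (p i).1 ≠ (p i).2 := G.ne_of_adj (hadj i)
          have hperW : ∀ w ∈ W, (({(p i).1, (p i).2} : Finset V) ∩ G.neighborFinset w).card
              ≤ (if G.Adj (p i).1 w then 1 else 0) + (if G.Adj (p i).2 w then 1 else 0) := by
            intro w hw
            have hsplitpair : ({(p i).1, (p i).2} : Finset V) = {(p i).1} ∪ {(p i).2} := by
              ext x; simp
            rw [hsplitpair, Finset.union_inter_distrib_right]
            refine le_trans (Finset.card_union_le _ _) ?_
            gcongr
            · by_cases h : G.Adj (p i).1 w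
              · simp [h]
                refine le_trans (Finset.card_le_card (Finset.inter_subset_left)) (by simp)
              · have : ({(p i).1} : Finset V) ∩ G.neighborFinset w = ∅ := by
                  ext x
                  simp only [Finset.mem_inter, Finset.mem_singleton, SimpleGraph.mem_neighborFinset,
                    Finset.notMem_empty, iff_false]
                  rintro ⟨rfl, hadj'⟩
                  exact h hadj'.symm
                simp [this, h]
            · by_cases h : G.Adj (p i).2 w
              · simp [h]
                refine le_trans (Finset.card_le_card (Finset.inter_subset_left)) (by simp)
              · have : ({(p i).2} : Finset V) ∩ G.neighborFinset w = ∅ := by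
                  ext x
                  simp only [Finset.mem_inter, Finset.mem_singleton, SimpleGraph.mem_neighborFinset,
                    Finset.notMem_empty, iff_false]
                  rintro ⟨rfl, hadj'⟩
                  exact h hadj'.symm
                simp [this, h]
          calc ∑ w ∈ W, (({(p i).1, (p i).2} : Finset V) ∩ G.neighborFinset w).card
              ≤ ∑ w ∈ W, ((if G.Adj (p i).1 w then 1 else 0) + (if G.Adj (p i).2 w then 1 else 0)) :=
                Finset.sum_le_sum hperW
            _ = (W.filter (fun w => G.Adj (p i).1 w)).card
                + (W.filter (fun w => G.Adj (p i).2 w)).card := by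
                rw [Finset.sum_add_distrib, Finset.sum_boole, Finset.sum_boole]; simp
            _ ≤ W.card := key i
        have final : (k' + 1) * W.card ≤ s * W.card := by
          calc (k' + 1) * W.card ≤ ∑ w ∈ W, (G.neighborFinset w).card := step1
            _ ≤ ∑ i : Fin s, ∑ w ∈ W, (({(p i).1, (p i).2} : Finset V) ∩ G.neighborFinset w).card := step3
            _ ≤ ∑ i : Fin s, W.card := Finset.sum_le_sum (fun i _ => step4 i)
            _ = s * W.card := by simp [mul_comm]
        have hmono : s * W.card ≤ k' * W.card := Nat.mul_le_mul_right W.card hsk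
        have h2' : (k' + 1) * W.card ≤ k' * W.card := final.trans hmono
        rw [add_mul, one_mul] at h2'
        omega
      -- final bound in case B
      set S : Finset V := U ∪ W with hSdef
      have hScard : S.card ≤ 2 * k' + 1 := by
        calc S.card ≤ U.card + W.card := Finset.card_union_le _ _
          _ ≤ 2 * s + 1 := by omega
          _ ≤ 2 * k' + 1 := by omega
      have hNS : ∀ v ∈ S, G.neighborFinset v ⊆ S.erase v := by
        intro v hv z hz
        rw [SimpleGraph.mem_neighborFinset] at hz
        rw [Finset.mem_erase]
        refine ⟨fun e => (G.ne_of_adj hz) e.symm, ?_⟩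
        by_cases hzU : z ∈ U
        · exact Finset.mem_union_left _ hzU
        · refine Finset.mem_union_right _ ((hWmem z).mpr ⟨hzU, v, hz.symm⟩)
      have hdegS : ∀ v ∈ S, G.degree v ≤ S.card - 1 := by
        intro v hv
        calc G.degree v = (G.neighborFinset v).card := rfl
          _ ≤ (S.erase v).card := Finset.card_le_card (hNS v hv)
          _ = S.card - 1 := Finset.card_erase_of_mem hv
      have hdeg0 : ∀ v, v ∉ S → G.degree v = 0 := by
        intro v hv
        rw [← SimpleGraph.card_neighborFinset_eq_degree, Finset.card_eq_zero]
        ext z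
        simp only [SimpleGraph.mem_neighborFinset, Finset.notMem_empty, iff_false]
        intro hz
        by_cases hvU : v ∈ U
        · exact hv (Finset.mem_union_left _ hvU)
        · exact hv (Finset.mem_union_right _ ((hWmem v).mpr ⟨hvU, z, hz⟩))
      have hhandshake : ∑ v, G.degree v = 2 * G.edgeFinset.card :=
        SimpleGraph.sum_degrees_eq_twice_card_edges G
      have hsumS : ∑ v, G.degree v = ∑ v ∈ S, G.degree v := by
        refine (Finset.sum_subset (Finset.subset_univ S) ?_).symm
        intro v _ hv
        exact hdeg0 v hv
      have h2e : 2 * G.edgeFinset.card ≤ S.card * (S.card - 1) := by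
        rw [← hhandshake, hsumS]
        refine le_trans (Finset.sum_le_card_nsmul S _ (S.card - 1) (fun v hv => hdegS v hv)) ?_
        simp [smul_eq_mul]
      have h2e' : 2 * G.edgeFinset.card ≤ (2 * k' + 1) * (2 * k') := by
        refine le_trans h2e (Nat.mul_le_mul hScard (by omega))
      -- conclude
      have hfinal : 5 * k' + 3 ≤ 2 * n := by omega
      have hmul : k' * (5 * k' + 3) ≤ k' * (2 * n) := Nat.mul_le_mul_left k' hfinal
      rw [Nat.add_sub_cancel]
      nlinarith [h2e', hmul]

end EG

/-- if `k ≥ 2`, `n ≥ (5k-2)/2` and `G` on `n` vertices has no `k` pairwise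
disjoint edges, then `e(G) ≤ (k-1)n - k(k-1)/2`. -/


theorem stmt8 {n k : ℕ} (hk : 2 ≤ k) (hn : 5 * k - 2 ≤ 2 * n) (G : SimpleGraph (Fin n))
    (hfree : ¬ HasMatching G k) :
    G.edgeSet.ncard ≤ (k - 1) * n - k * (k - 1) / 2 := by
  have hcard : 5 * k ≤ 2 * Fintype.card (Fin n) + 2 := by
    rw [Fintype.card_fin]; omega
  have key := EG.main k (Fin n) G hfree hcard
  rw [Fintype.card_fin, mul_assoc] at key
  have hnc : G.edgeSet.ncard = G.edgeFinset.card := Set.ncard_eq_toFinset_card' _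
  rw [hnc]
  have heven : Even (k * (k - 1)) := by
    rcases Nat.even_or_odd k with h | h
    · exact h.mul_right _
    · have h1 : Even (k - 1) := Nat.Odd.sub_odd h odd_one
      exact h1.mul_left _
  obtain ⟨r, hr⟩ := heven
  generalize hy : (k - 1) * n = y at key ⊢
  generalize hz : k * (k - 1) = z at key hr ⊢
  omega

end
end

section
/- Let k ≥ 2 and 2k - 1 ≤ n < (5k - 2)/2. If G is a graph on n vertices containing no k pairwise disjoint edges, then e(G) ≤ C(2k-1, 2), with equality if and only if G is isomorphic to K_{2k-1} ∪ (n - 2k + 1)K_1. -/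
open Matrix

noncomputable section
open scoped Classical

section Proofs
set_option maxHeartbeats 1600000

lemma hasMatching_zero {V : Type*} (G : SimpleGraph V) : HasMatching G 0 :=
  ⟨Fin.elim0, fun i => i.elim0, fun i => i.elim0⟩

/-- transfer a matching along an injective graph hom -/
lemma HasMatching.map {V W : Type*} {G : SimpleGraph V} {H : SimpleGraph W} {k : ℕ}
    (f : V → W) (hinj : Function.Injective f)
    (hadj : ∀ a b, G.Adj a b → H.Adj (f a) (f b)) :
    HasMatching G k → HasMatching H k := by
  rintro ⟨p, h1, h2⟩
  refine ⟨fun i => ((f (p i).1), (f (p i).2)), fun i => hadj _ _ (h1 i), ?_⟩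
  intro i j hij
  obtain ⟨a, b, c, d⟩ := h2 i j hij
  exact ⟨fun h => a (hinj h), fun h => b (hinj h), fun h => c (hinj h), fun h => d (hinj h)⟩

/-- extend a matching by one fresh edge -/
lemma HasMatching.extend {V : Type*} {G : SimpleGraph V} {t : ℕ}
    (p : Fin t → V × V) (hp1 : ∀ i, G.Adj (p i).1 (p i).2)
    (hp2 : ∀ i j, i ≠ j → (p i).1 ≠ (p j).1 ∧ (p i).1 ≠ (p j).2 ∧
      (p i).2 ≠ (p j).1 ∧ (p i).2 ≠ (p j).2)
    (a b : V) (hab : G.Adj a b)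
    (ha : ∀ i, a ≠ (p i).1 ∧ a ≠ (p i).2) (hb : ∀ i, b ≠ (p i).1 ∧ b ≠ (p i).2) :
    HasMatching G (t + 1) := by
  refine ⟨fun j => if h : (j : ℕ) < t then p ⟨j, h⟩ else (a, b), fun j => ?_, fun i j hij => ?_⟩
  · dsimp only; split
    · exact hp1 _
    · exact hab
  · have key : ∀ (x y : V), (∀ i, x ≠ (p i).1 ∧ x ≠ (p i).2) → True := fun _ _ _ => trivial
    dsimp only
    rcases Nat.lt_or_ge (i : ℕ) t with hi | hi <;> rcases Nat.lt_or_ge (j : ℕ) t with hj | hj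
    · rw [dif_pos hi, dif_pos hj]
      exact hp2 _ _ (by simp [Fin.ext_iff]; exact fun h => hij (Fin.ext h))
    · rw [dif_pos hi, dif_neg (Nat.not_lt.2 hj)]
      have h1 := ha ⟨i, hi⟩; have h2 := hb ⟨i, hi⟩
      exact ⟨fun h => h1.1 h.symm, fun h => h2.1 h.symm, fun h => h1.2 h.symm, fun h => h2.2 h.symm⟩
    · rw [dif_neg (Nat.not_lt.2 hi), dif_pos hj]
      have h1 := ha ⟨j, hj⟩; have h2 := hb ⟨j, hj⟩
      exact ⟨h1.1, h1.2, h2.1, h2.2⟩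
    · exfalso; apply hij; have := i.isLt; have := j.isLt; omega


/-- replace one pair of a matching by two fresh pairs -/
lemma HasMatching.replaceExtend {V : Type*} {G : SimpleGraph V} {t : ℕ}
    (p : Fin t → V × V) (i0 : Fin t) (hp1 : ∀ i, G.Adj (p i).1 (p i).2)
    (hp2 : ∀ i j, i ≠ j → (p i).1 ≠ (p j).1 ∧ (p i).1 ≠ (p j).2 ∧
      (p i).2 ≠ (p j).1 ∧ (p i).2 ≠ (p j).2)
    (a1 b1 a2 b2 : V) (h1 : G.Adj a1 b1) (h2 : G.Adj a2 b2)
    (hdist : a1 ≠ b1 ∧ a1 ≠ a2 ∧ a1 ≠ b2 ∧ b1 ≠ a2 ∧ b1 ≠ b2 ∧ a2 ≠ b2)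
    (hfresh : ∀ (x : V), (x = a1 ∨ x = b1 ∨ x = a2 ∨ x = b2) →
      ∀ j, j ≠ i0 → x ≠ (p j).1 ∧ x ≠ (p j).2) :
    HasMatching G (t + 1) := by
  classical
  set q : Fin t → V × V := Function.update p i0 (a1, b1) with hq
  refine ⟨fun j => if h : (j : ℕ) < t then q ⟨j, h⟩ else (a2, b2), fun j => ?_, fun i j hij => ?_⟩
  · dsimp only; split
    · rcases eq_or_ne (⟨j, ‹_›⟩ : Fin t) i0 with h | h
      · simp [hq, h]; exact h1
      · simp [hq, Function.update_of_ne h]; exact hp1 _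
    · exact h2
  · dsimp only
    have qfst : ∀ (m : Fin t), (q m = (a1,b1) ∧ m = i0) ∨ (q m = p m ∧ m ≠ i0) := by
      intro m
      rcases eq_or_ne m i0 with h | h
      · left; simp [hq, h]
      · right; simp [hq, Function.update_of_ne h, h]
    rcases Nat.lt_or_ge (i : ℕ) t with hi | hi <;> rcases Nat.lt_or_ge (j : ℕ) t with hj | hj
    · have hne : (⟨i, hi⟩ : Fin t) ≠ ⟨j, hj⟩ := by
        simp [Fin.ext_iff]; exact fun h => hij (Fin.ext h)
      rw [dif_pos hi, dif_pos hj]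
      rcases qfst ⟨i, hi⟩ with ⟨e1, m1⟩ | ⟨e1, m1⟩ <;> rcases qfst ⟨j, hj⟩ with ⟨e2, m2⟩ | ⟨e2, m2⟩
      · exact absurd (m1.trans m2.symm) hne
      · rw [e1, e2]
        have ha := hfresh a1 (by tauto) _ m2
        have hb := hfresh b1 (by tauto) _ m2
        exact ⟨ha.1, ha.2, hb.1, hb.2⟩
      · rw [e1, e2]
        have ha := hfresh a1 (by tauto) _ m1
        have hb := hfresh b1 (by tauto) _ m1
        exact ⟨fun h => ha.1 h.symm, fun h => hb.1 h.symm, fun h => ha.2 h.symm, fun h => hb.2 h.symm⟩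
      · rw [e1, e2]; exact hp2 _ _ hne
    · rw [dif_pos hi, dif_neg (Nat.not_lt.2 hj)]
      rcases qfst ⟨i, hi⟩ with ⟨e1, m1⟩ | ⟨e1, m1⟩
      · rw [e1]; exact ⟨hdist.2.1, hdist.2.2.1, hdist.2.2.2.1, hdist.2.2.2.2.1⟩
      · rw [e1]
        have ha := hfresh a2 (by tauto) _ m1
        have hb := hfresh b2 (by tauto) _ m1
        exact ⟨fun h => ha.1 h.symm, fun h => hb.1 h.symm, fun h => ha.2 h.symm, fun h => hb.2 h.symm⟩
    · rw [dif_neg (Nat.not_lt.2 hi), dif_pos hj]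
      rcases qfst ⟨j, hj⟩ with ⟨e2, m2⟩ | ⟨e2, m2⟩
      · rw [e2]
        exact ⟨hdist.2.1.symm, hdist.2.2.2.1.symm, hdist.2.2.1.symm, hdist.2.2.2.2.1.symm⟩
      · rw [e2]
        have ha := hfresh a2 (by tauto) _ m2
        have hb := hfresh b2 (by tauto) _ m2
        exact ⟨ha.1, ha.2, hb.1, hb.2⟩
    · exfalso; apply hij; have := i.isLt; have := j.isLt; omega


lemma aug {V : Type*} [Fintype V] {G : SimpleGraph V} {t : ℕ}
    (hcard : 2 * t + 2 ≤ Fintype.card V) (hdeg : ∀ v, t + 1 ≤ G.degree v)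
    (hm : HasMatching G t) : HasMatching G (t + 1) := by
  by_contra hcon
  obtain ⟨p, hp1, hp2⟩ := hm
  set S : Finset V :=
    Finset.univ.image (fun i => (p i).1) ∪ Finset.univ.image (fun i => (p i).2) with hS
  have hScard : S.card ≤ 2 * t := by
    refine le_trans (Finset.card_union_le _ _) ?_
    have h1 := Finset.card_image_le (s := (Finset.univ : Finset (Fin t))) (f := fun i => (p i).1)
    have h2 := Finset.card_image_le (s := (Finset.univ : Finset (Fin t))) (f := fun i => (p i).2)
    simp only [Finset.card_univ, Fintype.card_fin] at h1 h2
    omega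
  have hfresh : ∀ z : V, z ∉ S → ∀ i, z ≠ (p i).1 ∧ z ≠ (p i).2 := by
    intro z hz i
    constructor <;> intro h <;> apply hz <;> rw [hS] <;> simp <;>
      [exact Or.inl ⟨i, h.symm⟩; exact Or.inr ⟨i, h.symm⟩]
  have hcompl : 2 ≤ Sᶜ.card := by
    have := Finset.card_compl S (α := V); omega
  obtain ⟨x, hx, y, hy, hxy⟩ := Finset.one_lt_card.1 hcompl
  rw [Finset.mem_compl] at hx hy
  -- x, y unsaturated
  have hnxy : ¬ G.Adj x y := fun h => hcon (HasMatching.extend p hp1 hp2 x y h (hfresh x hx) (hfresh y hy))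
  have hnbr : ∀ z : V, z ∉ S → G.neighborFinset z ⊆ S := by
    intro z hz w hw
    rw [SimpleGraph.mem_neighborFinset] at hw
    by_contra hwS
    exact hcon (HasMatching.extend p hp1 hp2 z w hw (hfresh z hz) (hfresh w hwS))
  -- counting
  set pair : Fin t → Finset V := fun i => {(p i).1, (p i).2} with hpair
  have hsplit : ∀ s : Finset V, s ⊆ S → s.card ≤ ∑ i : Fin t, (s ∩ pair i).card := by
    intro s hs
    have hsub : s ⊆ Finset.univ.biUnion (fun i => s ∩ pair i) := by
      intro z hz
      have hzS := hs hz
      rw [hS, Finset.mem_union] at hzS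
      rcases hzS with h | h <;> simp only [Finset.mem_image, Finset.mem_univ, true_and] at h <;>
        obtain ⟨i, hi⟩ := h <;>
        · refine Finset.mem_biUnion.2 ⟨i, Finset.mem_univ _, Finset.mem_inter.2 ⟨hz, ?_⟩⟩
          simp [hpair, hi.symm]
    exact le_trans (Finset.card_le_card hsub) (Finset.card_biUnion_le)
  have hx' := hsplit _ (hnbr x hx)
  have hy' := hsplit _ (hnbr y hy)
  rw [SimpleGraph.card_neighborFinset_eq_degree] at hx' hy'
  have hex : ∃ i : Fin t, 3 ≤ (G.neighborFinset x ∩ pair i).card + (G.neighborFinset y ∩ pair i).card := by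
    by_contra hno
    push_neg at hno
    have : ∑ i : Fin t, ((G.neighborFinset x ∩ pair i).card + (G.neighborFinset y ∩ pair i).card)
        ≤ ∑ _i : Fin t, 2 := Finset.sum_le_sum (fun i _ => by have := hno i; omega)
    rw [Finset.sum_add_distrib] at this
    simp only [Finset.sum_const, Finset.card_univ, Fintype.card_fin, smul_eq_mul] at this
    have hdx := hdeg x; have hdy := hdeg y
    omega
  obtain ⟨i, h3⟩ := hex
  set u := (p i).1 with hu
  set v := (p i).2 with hv
  have huv : u ≠ v := (hp1 i).ne
  have hsub2 : ∀ s : Finset V, s ∩ pair i ⊆ {u, v} := by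
    intro s z hz
    have := (Finset.mem_inter.1 hz).2
    simpa [hpair] using this
  have hle2 : ∀ s : Finset V, (s ∩ pair i).card ≤ 2 := by
    intro s
    refine le_trans (Finset.card_le_card (hsub2 s)) ?_
    exact le_trans (Finset.card_insert_le _ _) (by simp)
  have hcard2 : ∀ s : Finset V, 2 ≤ (s ∩ pair i).card → u ∈ s ∧ v ∈ s := by
    intro s h2
    have hcuv : ({u, v} : Finset V).card = 2 := by rw [Finset.card_insert_of_notMem (by simp [huv]), Finset.card_singleton]
    have heq : s ∩ pair i = {u, v} := Finset.eq_of_subset_of_card_le (hsub2 s) (by omega)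
    constructor
    · have : u ∈ s ∩ pair i := by rw [heq]; simp
      exact (Finset.mem_inter.1 this).1
    · have : v ∈ s ∩ pair i := by rw [heq]; simp
      exact (Finset.mem_inter.1 this).1
  have hcard1 : ∀ s : Finset V, 1 ≤ (s ∩ pair i).card → u ∈ s ∨ v ∈ s := by
    intro s h1
    obtain ⟨z, hz⟩ := Finset.card_pos.1 h1
    have hzuv := hsub2 s hz
    have hzs := (Finset.mem_inter.1 hz).1
    simp only [Finset.mem_insert, Finset.mem_singleton] at hzuv
    rcases hzuv with rfl | rfl
    · exact Or.inl hzs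
    · exact Or.inr hzs
  have h4 : (G.Adj x u ∧ G.Adj x v ∧ (G.Adj y u ∨ G.Adj y v)) ∨
      (G.Adj y u ∧ G.Adj y v ∧ (G.Adj x u ∨ G.Adj x v)) := by
    have hl2x := hle2 (G.neighborFinset x)
    have hl2y := hle2 (G.neighborFinset y)
    rcases Nat.lt_or_ge ((G.neighborFinset x ∩ pair i).card) 2 with hlt | hge
    · have hy2 : 2 ≤ (G.neighborFinset y ∩ pair i).card := by omega
      have hx1 : 1 ≤ (G.neighborFinset x ∩ pair i).card := by omega
      obtain ⟨h1, h2⟩ := hcard2 _ hy2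
      have h3' := hcard1 _ hx1
      rw [SimpleGraph.mem_neighborFinset] at h1 h2
      right
      exact ⟨h1, h2, by rcases h3' with h | h <;> rw [SimpleGraph.mem_neighborFinset] at h <;> [exact Or.inl h; exact Or.inr h]⟩
    · obtain ⟨h1, h2⟩ := hcard2 _ hge
      have hy1 : 1 ≤ (G.neighborFinset y ∩ pair i).card := by omega
      have h3' := hcard1 _ hy1
      rw [SimpleGraph.mem_neighborFinset] at h1 h2
      left
      exact ⟨h1, h2, by rcases h3' with h | h <;> rw [SimpleGraph.mem_neighborFinset] at h <;> [exact Or.inl h; exact Or.inr h]⟩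
  have hxS : ∀ w, (w = x ∨ w = y) → ∀ j, j ≠ i → w ≠ (p j).1 ∧ w ≠ (p j).2 := by
    rintro w (rfl | rfl) j _ <;> [exact hfresh _ hx j; exact hfresh _ hy j]
  have hins : ∀ w, (w = u ∨ w = v) → ∀ j, j ≠ i → w ≠ (p j).1 ∧ w ≠ (p j).2 := by
    rintro w (rfl | rfl) j hj
    · have := hp2 i j (fun h => hj h.symm); exact ⟨this.1, this.2.1⟩
    · have := hp2 i j (fun h => hj h.symm); exact ⟨this.2.2.1, this.2.2.2⟩
  have hxu_ne : x ≠ u ∧ x ≠ v ∧ y ≠ u ∧ y ≠ v := by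
    have h1 := hfresh x hx i; have h2 := hfresh y hy i
    exact ⟨h1.1, h1.2, h2.1, h2.2⟩
  have hfresh4 : ∀ (a1 b1 a2 b2 : V), ({a1,b1,a2,b2} : Set V) = {x,y,u,v} →
      ∀ (w : V), (w = a1 ∨ w = b1 ∨ w = a2 ∨ w = b2) → ∀ j, j ≠ i → w ≠ (p j).1 ∧ w ≠ (p j).2 := by
    intro a1 b1 a2 b2 hset w hw j hj
    have : w ∈ ({a1,b1,a2,b2} : Set V) := by rcases hw with rfl|rfl|rfl|rfl <;> simp
    rw [hset] at this
    simp only [Set.mem_insert_iff, Set.mem_singleton_iff] at this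
    rcases this with rfl|rfl|rfl|rfl
    · exact hxS _ (Or.inl rfl) j hj
    · exact hxS _ (Or.inr rfl) j hj
    · exact hins _ (Or.inl rfl) j hj
    · exact hins _ (Or.inr rfl) j hj
  obtain ⟨nxu, nxv, nyu, nyv⟩ := hxu_ne
  rcases h4 with ⟨hau, hav, hb⟩ | ⟨hbu, hbv, ha⟩
  · rcases hb with hbu | hbv
    · exact hcon (HasMatching.replaceExtend p i hp1 hp2 x v y u hav hbu
        ⟨nxv, hxy, nxu, Ne.symm nyv, Ne.symm huv, nyu⟩
        (hfresh4 x v y u (by ext z; simp; tauto)))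
    · exact hcon (HasMatching.replaceExtend p i hp1 hp2 x u y v hau hbv
        ⟨nxu, hxy, nxv, Ne.symm nyu, huv, nyv⟩
        (hfresh4 x u y v (by ext z; simp; tauto)))
  · rcases ha with hau | hav
    · exact hcon (HasMatching.replaceExtend p i hp1 hp2 y v x u hbv hau
        ⟨nyv, Ne.symm hxy, nyu, Ne.symm nxv, Ne.symm huv, nxu⟩
        (hfresh4 y v x u (by ext z; simp; tauto)))
    · exact hcon (HasMatching.replaceExtend p i hp1 hp2 y u x v hbu hav
        ⟨nyu, Ne.symm hxy, nyv, Ne.symm nxu, huv, nxv⟩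
        (hfresh4 y u x v (by ext z; simp; tauto)))


section EdgeCount
variable {V : Type} [Fintype V]

lemma ecard_eq_finset (G : SimpleGraph V) : G.edgeSet.ncard = G.edgeFinset.card := by
  rw [SimpleGraph.edgeFinset, Set.ncard_eq_toFinset_card']

lemma ecard_le_of_embedding {W : Type} [Fintype W] {G : SimpleGraph V} {H : SimpleGraph W}
    (f : G ↪g H) : G.edgeSet.ncard ≤ H.edgeSet.ncard := by
  rw [Set.ncard_eq_toFinset_card', Set.ncard_eq_toFinset_card', Set.toFinset_card,
    Set.toFinset_card]
  exact Fintype.card_le_of_embedding f.mapEdgeSet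

lemma ecard_eq_of_iso {W : Type} [Fintype W] {G : SimpleGraph V} {H : SimpleGraph W}
    (f : G ≃g H) : G.edgeSet.ncard = H.edgeSet.ncard := by
  rw [Set.ncard_eq_toFinset_card', Set.ncard_eq_toFinset_card', Set.toFinset_card,
    Set.toFinset_card]
  exact Fintype.card_congr f.mapEdgeSet

lemma ecard_induce_le (G : SimpleGraph V) (s : Set V) :
    (G.induce s).edgeSet.ncard ≤ G.edgeSet.ncard :=
  ecard_le_of_embedding (SimpleGraph.Embedding.induce s)

lemma ecard_split_two (G : SimpleGraph V) (s : Set V) (x y : V)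
    (hcover : ∀ z, z ∉ s → z = x ∨ z = y) :
    G.edgeSet.ncard ≤ (G.induce s).edgeSet.ncard + G.degree x + G.degree y := by
  rw [ecard_eq_finset, ecard_eq_finset]
  have hsub : G.edgeFinset ⊆
      ((G.induce s).edgeFinset.image (Sym2.map Subtype.val)) ∪
        G.incidenceFinset x ∪ G.incidenceFinset y := by
    intro e he
    induction e with
    | _ a b =>
      rw [SimpleGraph.mem_edgeFinset, SimpleGraph.mem_edgeSet] at he
      by_cases ha : a ∈ s
      · by_cases hb : b ∈ s
        · refine Finset.mem_union_left _ (Finset.mem_union_left _ ?_)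
          refine Finset.mem_image.2 ⟨s(⟨a, ha⟩, ⟨b, hb⟩), ?_, by simp⟩
          rw [SimpleGraph.mem_edgeFinset, SimpleGraph.mem_edgeSet]
          exact he
        · rcases hcover b hb with rfl | rfl
          · exact Finset.mem_union_left _ (Finset.mem_union_right _ (by
              rw [SimpleGraph.mem_incidenceFinset]
              exact ⟨he, by simp⟩))
          · exact Finset.mem_union_right _ (by
              rw [SimpleGraph.mem_incidenceFinset]
              exact ⟨he, by simp⟩)
      · rcases hcover a ha with rfl | rfl
        · exact Finset.mem_union_left _ (Finset.mem_union_right _ (by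
            rw [SimpleGraph.mem_incidenceFinset]
            exact ⟨he, by simp⟩))
        · exact Finset.mem_union_right _ (by
            rw [SimpleGraph.mem_incidenceFinset]
            exact ⟨he, by simp⟩)
  calc G.edgeFinset.card ≤ _ := Finset.card_le_card hsub
    _ ≤ ((G.induce s).edgeFinset.image (Sym2.map Subtype.val)).card
        + (G.incidenceFinset x).card + (G.incidenceFinset y).card := by
          refine le_trans (Finset.card_union_le _ _) ?_
          have := Finset.card_union_le ((G.induce s).edgeFinset.image (Sym2.map Subtype.val))
            (G.incidenceFinset x)
          omega
    _ ≤ (G.induce s).edgeFinset.card + G.degree x + G.degree y := by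
          have h1 := Finset.card_image_le (s := (G.induce s).edgeFinset) (f := Sym2.map Subtype.val)
          have h2 := SimpleGraph.card_incidenceFinset_eq_degree G x
          have h3 := SimpleGraph.card_incidenceFinset_eq_degree G y
          omega

lemma ecard_split_one (G : SimpleGraph V) (s : Set V) (x : V)
    (hcover : ∀ z, z ∉ s → z = x) :
    G.edgeSet.ncard ≤ (G.induce s).edgeSet.ncard + G.degree x := by
  have := ecard_split_two G s x x (fun z hz => Or.inl (hcover z hz))
  have hmono := ecard_induce_le G s
  -- can't just divide; redo: use the two-version but with degree counted once
  rw [ecard_eq_finset, ecard_eq_finset]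
  have hsub : G.edgeFinset ⊆
      ((G.induce s).edgeFinset.image (Sym2.map Subtype.val)) ∪ G.incidenceFinset x := by
    intro e he
    induction e with
    | _ a b =>
      rw [SimpleGraph.mem_edgeFinset, SimpleGraph.mem_edgeSet] at he
      by_cases ha : a ∈ s
      · by_cases hb : b ∈ s
        · refine Finset.mem_union_left _ ?_
          refine Finset.mem_image.2 ⟨s(⟨a, ha⟩, ⟨b, hb⟩), ?_, by simp⟩
          rw [SimpleGraph.mem_edgeFinset, SimpleGraph.mem_edgeSet]
          exact he
        · have := hcover b hb; subst this
          exact Finset.mem_union_right _ (by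
            rw [SimpleGraph.mem_incidenceFinset]; exact ⟨he, by simp⟩)
      · have := hcover a ha; subst this
        exact Finset.mem_union_right _ (by
          rw [SimpleGraph.mem_incidenceFinset]; exact ⟨he, by simp⟩)
  calc G.edgeFinset.card ≤ _ := Finset.card_le_card hsub
    _ ≤ ((G.induce s).edgeFinset.image (Sym2.map Subtype.val)).card
        + (G.incidenceFinset x).card := Finset.card_union_le _ _
    _ ≤ (G.induce s).edgeFinset.card + G.degree x := by
          have h1 := Finset.card_image_le (s := (G.induce s).edgeFinset) (f := Sym2.map Subtype.val)
          have h2 := SimpleGraph.card_incidenceFinset_eq_degree G x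
          omega

lemma ecard_isolated (G : SimpleGraph V) (x : V) (hx : G.degree x = 0) :
    G.edgeSet.ncard = (G.induce {z | z ≠ x}).edgeSet.ncard := by
  have h1 := ecard_split_one G {z | z ≠ x} x (fun z hz => by simpa using hz)
  have h2 := ecard_induce_le G {z | z ≠ x}
  omega

lemma ecard_le_choose (G : SimpleGraph V) :
    G.edgeSet.ncard ≤ (Fintype.card V).choose 2 := by
  rw [ecard_eq_finset]
  exact SimpleGraph.card_edgeFinset_le_card_choose_two

lemma ecard_top (n : ℕ) : (⊤ : SimpleGraph (Fin n)).edgeSet.ncard = n.choose 2 := by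
  rw [SimpleGraph.edgeSet_top, ← Nat.card_coe_set_eq, Nat.card_eq_fintype_card]
  rw [Sym2.card_diagSet_compl, Fintype.card_fin]

lemma eq_top_of_ecard (G : SimpleGraph V) (h : G.edgeSet.ncard = (Fintype.card V).choose 2) :
    G = ⊤ := by
  have hsub : G.edgeFinset ⊆ (⊤ : SimpleGraph V).edgeFinset :=
    SimpleGraph.edgeFinset_mono le_top
  have hcard : (⊤ : SimpleGraph V).edgeFinset.card ≤ G.edgeFinset.card := by
    rw [SimpleGraph.card_edgeFinset_top_eq_card_choose_two, ← ecard_eq_finset, h]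
  have := Finset.eq_of_subset_of_card_le hsub hcard
  rw [SimpleGraph.edgeFinset_inj] at this
  exact this

@[simp] lemma cliqueUnion_adj' {n m : ℕ} {i j : Fin n} :
    (cliqueUnion n m).Adj i j ↔ i ≠ j ∧ i.val < m ∧ j.val < m := Iff.rfl

lemma ecard_cliqueUnion (n m : ℕ) (h : m ≤ n) :
    (cliqueUnion n m).edgeSet.ncard = m.choose 2 := by
  have himg : (cliqueUnion n m).edgeSet =
      Sym2.map (Fin.castLE h) '' (⊤ : SimpleGraph (Fin m)).edgeSet := by
    ext e
    induction e with
    | _ a b =>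
      simp only [SimpleGraph.mem_edgeSet, Set.mem_image, cliqueUnion_adj']
      constructor
      · rintro ⟨hne, ha, hb⟩
        refine ⟨s(⟨a.val, ha⟩, ⟨b.val, hb⟩), ?_, ?_⟩
        · rw [SimpleGraph.mem_edgeSet]
          simp only [SimpleGraph.top_adj, ne_eq, Fin.mk.injEq]
          intro hab; exact hne (Fin.ext hab)
        · simp [Sym2.map_pair_eq, Fin.castLE]
      · rintro ⟨e', he', heq⟩
        induction e' with
        | _ c d =>
          rw [SimpleGraph.mem_edgeSet] at he'
          have hne := (SimpleGraph.top_adj c d).1 he'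
          rw [Sym2.map_pair_eq, Sym2.eq_iff] at heq
          rcases heq with ⟨h1, h2⟩ | ⟨h1, h2⟩ <;> subst h1 <;> subst h2
          · exact ⟨fun hh => hne (Fin.castLE_injective h hh), by simp [Fin.castLE], by simp [Fin.castLE]⟩
          · exact ⟨fun hh => hne (Fin.castLE_injective h hh.symm), by simp [Fin.castLE], by simp [Fin.castLE]⟩
  rw [himg, Set.ncard_image_of_injective _ (Sym2.map.injective (Fin.castLE_injective h)),
    ← ecard_top m]
end EdgeCount


lemma choose_two_succ (m : ℕ) : (m + 1).choose 2 = m.choose 2 + m := by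
  rw [Nat.choose_succ_succ, Nat.choose_one_right, Nat.add_comm]

lemma two_mul_choose_two (m : ℕ) : 2 * (m + 1).choose 2 = (m + 1) * m := by
  induction m with
  | zero => rfl
  | succ m ih => rw [choose_two_succ]; nlinarith [ih]

lemma AR2a (J n : ℕ) (hn : 2*J+4 ≤ n) :
    (2*J+1).choose 2 + (n-1) ≤
      max ((2*(J+1)+1).choose 2) ((J+1).choose 2 + (J+1)*(n-(J+1))) := by
  obtain ⟨d, rfl⟩ : ∃ d, n = 2*J+4+d := ⟨n - (2*J+4), by omega⟩
  have c1 := two_mul_choose_two (2*J)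
  have c2 := two_mul_choose_two (2*J+2)
  have c3 := two_mul_choose_two J
  have e2 : 2*(J+1)+1 = (2*J+2)+1 := by ring
  have e3 : (2*J+4+d) - 1 = 2*J+3+d := by omega
  rw [e2, e3]
  rcases le_or_gt d (2*J) with hd | hd
  · refine le_max_of_le_left ?_
    have : 2 * ((2*J+1).choose 2 + (2*J+3+d)) ≤ 2 * ((2*J+2+1).choose 2) := by
      nlinarith [c1, c2]
    omega
  · refine le_max_of_le_right ?_
    have h1 : 2*J+4+d - (J+1) = J+3+d := by omega
    rw [h1]
    have : 2 * ((2*J+1).choose 2 + (2*J+3+d)) ≤ 2 * ((J+1).choose 2 + (J+1)*(J+3+d)) := by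
      nlinarith [c1, c3, hd]
    omega

lemma AR2b (J n : ℕ) (hn : 2*J+4 ≤ n) :
    J.choose 2 + J*((n-1) - J) + (n-1) ≤ (J+1).choose 2 + (J+1)*(n-(J+1)) := by
  obtain ⟨d, rfl⟩ : ∃ d, n = 2*J+4+d := ⟨n - (2*J+4), by omega⟩
  have c3 := two_mul_choose_two J
  have hc : (J+1).choose 2 = J.choose 2 + J := choose_two_succ J
  have h1 : 2*J+4+d - (J+1) = J+3+d := by omega
  have h2 : (2*J+4+d-1) - J = J+3+d := by omega
  have h3 : 2*J+4+d-1 = 2*J+3+d := by omega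
  rw [h1, h2, h3, hc]
  nlinarith

lemma AR3a (J : ℕ) : (2*J+1).choose 2 + (3*J+3) ≤ (2*(J+1)+1).choose 2 := by
  have c1 := two_mul_choose_two (2*J)
  have c2 := two_mul_choose_two (2*J+2)
  have e2 : 2*(J+1)+1 = (2*J+2)+1 := by ring
  rw [e2]
  have : 2 * ((2*J+1).choose 2 + (3*J+3)) ≤ 2 * ((2*J+2+1).choose 2) := by
    nlinarith [c1, c2]
  omega

lemma AR3b (J n : ℕ) (hn : 2*J+4 ≤ n) :
    J.choose 2 + J*((n-2) - J) + (3*J+3) ≤ (J+1).choose 2 + (J+1)*(n-(J+1)) := by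
  obtain ⟨d, rfl⟩ : ∃ d, n = 2*J+4+d := ⟨n - (2*J+4), by omega⟩
  have hc : (J+1).choose 2 = J.choose 2 + J := choose_two_succ J
  have h1 : 2*J+4+d - (J+1) = J+3+d := by omega
  have h2 : (2*J+4+d-2) - J = J+2+d := by omega
  rw [h1, h2, hc]
  nlinarith


lemma hasMatching_induce {V : Type*} {G : SimpleGraph V} {s : Set V} {t : ℕ} :
    HasMatching (G.induce s) t → HasMatching G t :=
  HasMatching.map Subtype.val Subtype.val_injective (fun a b h => by simpa using h)

lemma hasMatching_one_of_adj {V : Type*} {G : SimpleGraph V} {a b : V} (h : G.Adj a b) :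
    HasMatching G 1 :=
  ⟨fun _ => (a, b), fun _ => h, fun i j hij => absurd (Subsingleton.elim i j) hij⟩

lemma minDegree_matching {V : Type} [Fintype V] (G : SimpleGraph V) (k : ℕ)
    (hcard : 2 * k ≤ Fintype.card V) (hdeg : ∀ v, k ≤ G.degree v) : HasMatching G k := by
  suffices h : ∀ t, t ≤ k → HasMatching G t from h k le_rfl
  intro t
  induction t with
  | zero => exact fun _ => hasMatching_zero G
  | succ t ih =>
    intro ht
    exact aug (by omega) (fun v => le_trans (by omega) (hdeg v))
      (ih (le_trans (Nat.le_succ t) ht))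

/-- endpoints of a matching, as a finset -/
private def endpts {V : Type} {t : ℕ} (p : Fin t → V × V) : Finset V :=
  Finset.univ.image (fun i => (p i).1) ∪ Finset.univ.image (fun i => (p i).2)

private lemma endpts_card {V : Type} [Fintype V] {t : ℕ} (p : Fin t → V × V) :
    (endpts p).card ≤ 2 * t := by
  refine le_trans (Finset.card_union_le _ _) ?_
  have h1 := Finset.card_image_le (s := (Finset.univ : Finset (Fin t))) (f := fun i => (p i).1)
  have h2 := Finset.card_image_le (s := (Finset.univ : Finset (Fin t))) (f := fun i => (p i).2)
  simp only [Finset.card_univ, Fintype.card_fin] at h1 h2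
  omega

private lemma endpts_fresh {V : Type} {t : ℕ} (p : Fin t → V × V) (z : V)
    (hz : z ∉ endpts p) : ∀ i, z ≠ (p i).1 ∧ z ≠ (p i).2 := by
  intro i
  constructor <;> intro h <;> apply hz <;> rw [endpts, Finset.mem_union] <;>
    [exact Or.inl (Finset.mem_image.2 ⟨i, Finset.mem_univ _, h.symm⟩);
     exact Or.inr (Finset.mem_image.2 ⟨i, Finset.mem_univ _, h.symm⟩)]


lemma card_ne_one {V : Type} [Fintype V] (x : V) :
    Nat.card ↥({z : V | z ≠ x}) = Fintype.card V - 1 := by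
  rw [Nat.card_coe_set_eq]
  have h : {z : V | z ≠ x} = Set.univ \ {x} := by ext z; simp
  rw [h, Set.ncard_diff (Set.subset_univ _) (Set.toFinite _), Set.ncard_univ,
    Set.ncard_singleton, Nat.card_eq_fintype_card]

lemma card_ne_two {V : Type} [Fintype V] (x y : V) (hxy : x ≠ y) :
    Nat.card ↥({z : V | ¬ (z = x ∨ z = y)}) = Fintype.card V - 2 := by
  rw [Nat.card_coe_set_eq]
  have h : {z : V | ¬ (z = x ∨ z = y)} = Set.univ \ {x, y} := by ext z; simp [not_or]
  rw [h, Set.ncard_diff (Set.subset_univ _) (Set.toFinite _), Set.ncard_univ,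
    Set.ncard_pair hxy, Nat.card_eq_fintype_card]

theorem EG (n : ℕ) : ∀ (K : ℕ) (V : Type) [Fintype V] (G : SimpleGraph V),
    Fintype.card V = n → ¬ HasMatching G (K+1) →
    G.edgeSet.ncard ≤ max ((2*K+1).choose 2) (K.choose 2 + K * (n - K)) := by
  induction n using Nat.strong_induction_on with
  | _ n IH =>
    intro K V _ G hn hfree
    -- K = 0 : no edges at all
    rcases Nat.eq_zero_or_pos K with rfl | hK
    · have : G.edgeSet = ∅ := by
        by_contra h
        obtain ⟨e, he⟩ := Set.nonempty_iff_ne_empty.2 h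
        induction e with
        | _ a b => exact hfree (hasMatching_one_of_adj ((SimpleGraph.mem_edgeSet G).1 he))
      simp [this]
    -- small n
    by_cases hsmall : n ≤ 2*K+1
    · refine le_trans (ecard_le_choose G) (le_max_of_le_left ?_)
      rw [hn]
      exact Nat.choose_le_choose 2 hsmall
    push_neg at hsmall
    have hn2 : 2*K+2 ≤ n := hsmall
    obtain ⟨J, rfl⟩ : ∃ J, K = J+1 := ⟨K-1, by omega⟩
    -- isolated vertex case
    by_cases hiso : ∃ x, G.degree x = 0
    · obtain ⟨x, hx⟩ := hiso
      have hcard' : Fintype.card ↥({z : V | z ≠ x}) = n - 1 := by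
        rw [← Nat.card_eq_fintype_card, card_ne_one, hn]
      have hfree' : ¬ HasMatching (G.induce {z : V | z ≠ x}) (J+1+1) :=
        fun h => hfree (hasMatching_induce h)
      have hIH := IH (n-1) (by omega) (J+1) _ (G.induce {z : V | z ≠ x}) hcard' hfree'
      rw [ecard_isolated G x hx]
      refine le_trans hIH (max_le_max le_rfl ?_)
      have : (n-1) - (J+1) ≤ n - (J+1) := by omega
      exact Nat.add_le_add_left (Nat.mul_le_mul_left _ this) _
    push_neg at hiso
    -- big degree case
    by_cases hbig : ∃ v, 2*(J+1)+1 ≤ G.degree v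
    · obtain ⟨v, hv⟩ := hbig
      set s : Set V := {z : V | z ≠ v} with hs
      have hcard' : Fintype.card ↥s = n - 1 := by
        show Fintype.card ↥({z : V | z ≠ v}) = n - 1
        rw [← Nat.card_eq_fintype_card, card_ne_one, hn]
      have hfree' : ¬ HasMatching (G.induce s) (J+1) := by
        rintro ⟨p, hp1, hp2⟩
        -- lift to V
        set q : Fin (J+1) → V × V := fun i => (((p i).1 : V), ((p i).2 : V)) with hq
        have hq1 : ∀ i, G.Adj (q i).1 (q i).2 := fun i => by
          have := hp1 i; simpa [hq] using this
        have hq2 : ∀ i j, i ≠ j → (q i).1 ≠ (q j).1 ∧ (q i).1 ≠ (q j).2 ∧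
            (q i).2 ≠ (q j).1 ∧ (q i).2 ≠ (q j).2 := by
          intro i j hij
          have := hp2 i j hij
          refine ⟨fun h => this.1 (Subtype.ext h), fun h => this.2.1 (Subtype.ext h),
            fun h => this.2.2.1 (Subtype.ext h), fun h => this.2.2.2 (Subtype.ext h)⟩
        -- find unused neighbor of v
        have hnb : ¬ G.neighborFinset v ⊆ endpts q := by
          intro hsub
          have h1 := Finset.card_le_card hsub
          rw [SimpleGraph.card_neighborFinset_eq_degree] at h1
          have h2 := endpts_card q
          omega
        obtain ⟨w, hw1, hw2⟩ := Finset.not_subset.1 hnb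
        rw [SimpleGraph.mem_neighborFinset] at hw1
        refine hfree (HasMatching.extend q hq1 hq2 v w hw1 ?_ (endpts_fresh q w hw2))
        intro i
        have h1 : ((p i).1 : V) ≠ v := (p i).1.2
        have h2 : ((p i).2 : V) ≠ v := (p i).2.2
        exact ⟨fun h => h1 h.symm, fun h => h2 h.symm⟩
      have hIH := IH (n-1) (by omega) J _ (G.induce s) hcard' hfree'
      have hsplit := ecard_split_one G s v (fun z hz => by simpa [hs] using hz)
      have hdegv : G.degree v ≤ n - 1 := by
        have := SimpleGraph.degree_lt_card_verts (G := G) v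
        omega
      refine le_trans hsplit (le_trans (Nat.add_le_add hIH hdegv) ?_)
      have a1 := AR2a J n (by omega)
      have a2 := AR2b J n (by omega)
      omega
    push_neg at hbig
    -- low degree vertex case
    by_cases hlow : ∃ x, G.degree x ≤ J+1
    · obtain ⟨x, hx⟩ := hlow
      have hx1 : 1 ≤ G.degree x := by
        have := hiso x
        omega
      obtain ⟨y, hy⟩ : ∃ y, G.Adj x y := by
        obtain ⟨y, hy⟩ := Finset.card_pos.1 (by rw [SimpleGraph.card_neighborFinset_eq_degree]; omega :
          0 < (G.neighborFinset x).card)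
        exact ⟨y, (SimpleGraph.mem_neighborFinset _ _ _).1 hy⟩
      set s : Set V := {z : V | ¬ (z = x ∨ z = y)} with hs
      have hxy : x ≠ y := hy.ne
      have hcard' : Fintype.card ↥s = n - 2 := by
        show Fintype.card ↥({z : V | ¬ (z = x ∨ z = y)}) = n - 2
        rw [← Nat.card_eq_fintype_card, card_ne_two x y hxy, hn]
      have hfree' : ¬ HasMatching (G.induce s) (J+1) := by
        rintro ⟨p, hp1, hp2⟩
        set q : Fin (J+1) → V × V := fun i => (((p i).1 : V), ((p i).2 : V)) with hq
        have hq1 : ∀ i, G.Adj (q i).1 (q i).2 := fun i => by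
          have := hp1 i; simpa [hq] using this
        have hq2 : ∀ i j, i ≠ j → (q i).1 ≠ (q j).1 ∧ (q i).1 ≠ (q j).2 ∧
            (q i).2 ≠ (q j).1 ∧ (q i).2 ≠ (q j).2 := by
          intro i j hij
          have := hp2 i j hij
          refine ⟨fun h => this.1 (Subtype.ext h), fun h => this.2.1 (Subtype.ext h),
            fun h => this.2.2.1 (Subtype.ext h), fun h => this.2.2.2 (Subtype.ext h)⟩
        refine hfree (HasMatching.extend q hq1 hq2 x y hy ?_ ?_)
        · intro i
          have h1 : ¬(((p i).1 : V) = x ∨ ((p i).1 : V) = y) := (p i).1.2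
          have h2 : ¬(((p i).2 : V) = x ∨ ((p i).2 : V) = y) := (p i).2.2
          exact ⟨fun h => h1 (Or.inl h.symm), fun h => h2 (Or.inl h.symm)⟩
        · intro i
          have h1 : ¬(((p i).1 : V) = x ∨ ((p i).1 : V) = y) := (p i).1.2
          have h2 : ¬(((p i).2 : V) = x ∨ ((p i).2 : V) = y) := (p i).2.2
          exact ⟨fun h => h1 (Or.inr h.symm), fun h => h2 (Or.inr h.symm)⟩
      have hIH := IH (n-2) (by omega) J _ (G.induce s) hcard' hfree'
      have hsplit := ecard_split_two G s x y (fun z hz => by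
        rw [hs, Set.mem_setOf_eq, not_not] at hz; exact hz)
      have hdegy : G.degree y ≤ 2*(J+1) := by
        have := hbig y; omega
      have hsum : (G.induce s).edgeSet.ncard + G.degree x + G.degree y ≤
          (G.induce s).edgeSet.ncard + (3*J+3) := by omega
      refine le_trans hsplit (le_trans hsum ?_)
      refine le_trans (Nat.add_le_add_right hIH _) ?_
      have a1 := AR3a J
      have a2 := AR3b J n (by omega)
      omega
    -- min degree ≥ J+2 : contradiction
    push_neg at hlow
    exfalso
    exact hfree (minDegree_matching G (J+1+1) (by omega) (fun v => by have := hlow v; omega))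


-- new arithmetic
lemma AR4s (K n : ℕ) (hK : 1 ≤ K) (hn1 : 2*K+1 ≤ n) (hn : 2*n ≤ 5*K+2) :
    K.choose 2 + K*(n-K) < (2*K+1).choose 2 := by
  obtain ⟨d, rfl⟩ : ∃ d, n = 2*K+1+d := ⟨n - (2*K+1), by omega⟩
  obtain ⟨L, rfl⟩ : ∃ L, K = L+1 := ⟨K-1, by omega⟩
  have c2 := two_mul_choose_two L
  have c3 := two_mul_choose_two (2*L+2)
  have h1 : 2*(L+1)+1+d - (L+1) = L+2+d := by omega
  rw [h1]
  have e1 : (2*(L+1)+1).choose 2 = (2*L+2+1).choose 2 := by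
    have : 2*(L+1)+1 = 2*L+2+1 := by ring
    rw [this]
  rw [e1]
  have h2 : 2 * ((L+1).choose 2 + (L+1)*(L+2+d)) < 2 * ((2*L+2+1).choose 2) := by
    nlinarith [c2, c3]
  omega

lemma ARmax (K n : ℕ) (hK : 1 ≤ K) (hn1 : 2*K+1 ≤ n) (hn : 2*n ≤ 5*K+2) :
    max ((2*K+1).choose 2) (K.choose 2 + K*(n-K)) = (2*K+1).choose 2 :=
  max_eq_left (le_of_lt (AR4s K n hK hn1 hn))

lemma SA1 (J n : ℕ) (h1 : 2*J+4 ≤ n) (h2 : n ≤ 4*J+3) :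
    (2*J+1).choose 2 + (n-1) < (2*(J+1)+1).choose 2 := by
  have c1 := two_mul_choose_two (2*J)
  have c2 := two_mul_choose_two (2*J+2)
  have e1 : 2*(J+1)+1 = (2*J+2)+1 := by ring
  rw [e1]
  have h3 : n - 1 = n - 1 := rfl
  have h4 : 2 * ((2*J+1).choose 2 + (n-1)) < 2 * ((2*J+2+1).choose 2) := by
    have hn1 : 2*(n-1) ≤ 8*J+4 := by omega
    nlinarith [c1, c2]
  omega

lemma SB1 (J : ℕ) (hJ : 1 ≤ J) :
    (2*J+1).choose 2 + (3*J+3) < (2*(J+1)+1).choose 2 := by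
  have c1 := two_mul_choose_two (2*J)
  have c2 := two_mul_choose_two (2*J+2)
  have e1 : 2*(J+1)+1 = (2*J+2)+1 := by ring
  rw [e1]
  have h4 : 2 * ((2*J+1).choose 2 + (3*J+3)) < 2 * ((2*J+2+1).choose 2) := by
    nlinarith [c1, c2]
  omega

lemma SA (J n : ℕ) (hJ : 1 ≤ J) (h1 : 2*J+4 ≤ n) (h2 : 2*n ≤ 5*J+7) :
    max ((2*J+1).choose 2) (J.choose 2 + J*((n-1)-J)) + (n-1) < (2*(J+1)+1).choose 2 := by
  have a1 := SA1 J n h1 (by omega)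
  have a2 := AR2b J n h1
  have a3 := AR4s (J+1) n (by omega) (by omega) (by omega)
  omega

lemma SB (J n : ℕ) (hJ : 1 ≤ J) (h1 : 2*J+4 ≤ n) (h2 : 2*n ≤ 5*J+7) :
    max ((2*J+1).choose 2) (J.choose 2 + J*((n-2)-J)) + (3*J+3) < (2*(J+1)+1).choose 2 := by
  have a1 := SB1 J hJ
  have a2 := AR3b J n h1
  have a3 := AR4s (J+1) n (by omega) (by omega) (by omega)
  omega

lemma not_adj_of_degree_zero {V : Type} [Fintype V] (G : SimpleGraph V) (x : V)
    (hx : G.degree x = 0) : ∀ w, ¬ G.Adj x w := by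
  intro w h
  have h1 : w ∈ G.neighborFinset x := (SimpleGraph.mem_neighborFinset _ _ _).2 h
  have h2 := SimpleGraph.card_neighborFinset_eq_degree G x
  rw [hx, Finset.card_eq_zero] at h2
  rw [h2] at h1
  exact absurd h1 (Finset.notMem_empty w)

lemma cliqueUnion_eq_top (n : ℕ) : cliqueUnion n n = ⊤ := by
  ext i j
  simp only [cliqueUnion, SimpleGraph.top_adj]
  exact ⟨fun h => h.1, fun h => ⟨h, i.isLt, j.isLt⟩⟩

lemma iso_extend {V : Type} [Fintype V] {n m : ℕ} (hn : Fintype.card V = n) (hmn : m < n)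
    (G : SimpleGraph V) (x : V) (hx : ∀ w, ¬ G.Adj x w)
    (ee : ↥({z : V | z ≠ x}) ≃ Fin (n-1))
    (φ : (SimpleGraph.comap (⇑ee.symm) (G.induce {z : V | z ≠ x})) ≃g cliqueUnion (n-1) m) :
    Nonempty (G ≃g cliqueUnion n m) := by
  have h1n : 1 ≤ n := by omega
  let f : V → Fin n := fun w =>
    if h : w = x then ⟨n-1, by omega⟩
    else ⟨(φ (ee ⟨w, h⟩)).val, by have := (φ (ee ⟨w, h⟩)).isLt; omega⟩
  have hfval : ∀ (w : V) (h : w ≠ x), (f w).val = (φ (ee ⟨w, h⟩)).val := by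
    intro w h; simp only [f, dif_neg h]
  have hfx : (f x).val = n - 1 := by simp only [f, dif_pos rfl]
  have hinj : Function.Injective f := by
    intro a b hab
    by_cases ha : a = x <;> by_cases hb : b = x
    · rw [ha, hb]
    · exfalso
      have h1 := (φ (ee ⟨b, hb⟩)).isLt
      have h2 : (f a).val = (f b).val := congrArg Fin.val hab
      rw [ha] at h2; rw [hfx] at h2
      rw [hfval b hb] at h2
      omega
    · exfalso
      have h1 := (φ (ee ⟨a, ha⟩)).isLt
      have h2 : (f a).val = (f b).val := congrArg Fin.val hab
      rw [hb] at h2; rw [hfx] at h2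
      rw [hfval a ha] at h2
      omega
    · have h2 : (f a).val = (f b).val := congrArg Fin.val hab
      rw [hfval a ha, hfval b hb] at h2
      have h3 : φ (ee ⟨a, ha⟩) = φ (ee ⟨b, hb⟩) := Fin.ext h2
      have h4 := ee.injective (φ.toEquiv.injective h3)
      exact congrArg Subtype.val h4
  have hbij : Function.Bijective f :=
    (Fintype.bijective_iff_injective_and_card f).2 ⟨hinj, by simp [hn]⟩
  refine ⟨⟨Equiv.ofBijective f hbij, ?_⟩⟩
  intro a b
  show (cliqueUnion n m).Adj (f a) (f b) ↔ G.Adj a b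
  by_cases ha : a = x
  · subst ha
    rw [cliqueUnion_adj']
    constructor
    · rintro ⟨-, h2, -⟩
      rw [hfx] at h2
      exfalso; omega
    · intro h; exact absurd h (hx b)
  · by_cases hb : b = x
    · subst hb
      rw [cliqueUnion_adj']
      constructor
      · rintro ⟨-, -, h3⟩
        rw [hfx] at h3
        exfalso; omega
      · intro h; exact absurd h.symm (hx a)
    · have key := φ.map_rel_iff (a := ee ⟨a, ha⟩) (b := ee ⟨b, hb⟩)
      simp only [SimpleGraph.comap_adj, Equiv.symm_apply_apply] at key
      have key2 : G.Adj a b ↔ (cliqueUnion (n-1) m).Adj (φ (ee ⟨a, ha⟩)) (φ (ee ⟨b, hb⟩)) := by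
        rw [key]
        exact ⟨fun h => h, fun h => h⟩
      rw [key2]
      simp only [cliqueUnion_adj']
      constructor
      · rintro ⟨h1, h2, h3⟩
        rw [hfval a ha] at h2
        rw [hfval b hb] at h3
        refine ⟨fun hc => h1 ?_, h2, h3⟩
        apply Fin.ext
        rw [hfval a ha, hfval b hb, hc]
      · rintro ⟨h1, h2, h3⟩
        refine ⟨fun hc => h1 ?_, ?_, ?_⟩
        · apply Fin.ext
          have := congrArg Fin.val hc
          rw [hfval a ha, hfval b hb] at this
          exact this
        · rw [hfval a ha]; exact h2
        · rw [hfval b hb]; exact h3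

/-- strict bound when there is no isolated vertex -/
lemma strict_step (n J : ℕ) (hJ : 1 ≤ J) (h1 : 2*(J+1)+2 ≤ n) (h2 : 2*n ≤ 5*(J+1)+2)
    (V : Type) [Fintype V] (G : SimpleGraph V) (hcard : Fintype.card V = n)
    (hfree : ¬ HasMatching G (J+1+1)) (hno : ∀ x, G.degree x ≠ 0) :
    G.edgeSet.ncard < (2*(J+1)+1).choose 2 := by
  by_cases hbig : ∃ v, 2*(J+1)+1 ≤ G.degree v
  · obtain ⟨v, hv⟩ := hbig
    set s : Set V := {z : V | z ≠ v} with hs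
    have hcard' : Fintype.card ↥s = n - 1 := by
      show Fintype.card ↥({z : V | z ≠ v}) = n - 1
      rw [← Nat.card_eq_fintype_card, card_ne_one, hcard]
    have hfree' : ¬ HasMatching (G.induce s) (J+1) := by
      rintro ⟨p, hp1, hp2⟩
      set q : Fin (J+1) → V × V := fun i => (((p i).1 : V), ((p i).2 : V)) with hq
      have hq1 : ∀ i, G.Adj (q i).1 (q i).2 := fun i => by
        have := hp1 i; simpa [hq] using this
      have hq2 : ∀ i j, i ≠ j → (q i).1 ≠ (q j).1 ∧ (q i).1 ≠ (q j).2 ∧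
          (q i).2 ≠ (q j).1 ∧ (q i).2 ≠ (q j).2 := by
        intro i j hij
        have := hp2 i j hij
        refine ⟨fun h => this.1 (Subtype.ext h), fun h => this.2.1 (Subtype.ext h),
          fun h => this.2.2.1 (Subtype.ext h), fun h => this.2.2.2 (Subtype.ext h)⟩
      have hnb : ¬ G.neighborFinset v ⊆
          (Finset.univ.image (fun i => ((p i).1 : V)) ∪
            Finset.univ.image (fun i => ((p i).2 : V))) := by
        intro hsub
        have hc1 := Finset.card_le_card hsub
        rw [SimpleGraph.card_neighborFinset_eq_degree] at hc1
        have hc2 : (Finset.univ.image (fun i => ((p i).1 : V)) ∪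
            Finset.univ.image (fun i => ((p i).2 : V))).card ≤ 2*(J+1) := by
          refine le_trans (Finset.card_union_le _ _) ?_
          have u1 : (Finset.univ.image (fun i => ((p i).1 : V))).card
              ≤ (Finset.univ : Finset (Fin (J+1))).card := Finset.card_image_le
          have u2 : (Finset.univ.image (fun i => ((p i).2 : V))).card
              ≤ (Finset.univ : Finset (Fin (J+1))).card := Finset.card_image_le
          simp only [Finset.card_univ, Fintype.card_fin] at u1 u2
          omega
        omega
      obtain ⟨w, hw1, hw2⟩ := Finset.not_subset.1 hnb
      rw [SimpleGraph.mem_neighborFinset] at hw1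
      refine hfree (HasMatching.extend q hq1 hq2 v w hw1 ?_ ?_)
      · intro i
        have g1 : ((p i).1 : V) ≠ v := (p i).1.2
        have g2 : ((p i).2 : V) ≠ v := (p i).2.2
        exact ⟨fun h => g1 h.symm, fun h => g2 h.symm⟩
      · intro i
        constructor <;> intro h <;> apply hw2 <;> rw [Finset.mem_union]
        · exact Or.inl (Finset.mem_image.2 ⟨i, Finset.mem_univ _, h.symm⟩)
        · exact Or.inr (Finset.mem_image.2 ⟨i, Finset.mem_univ _, h.symm⟩)
    have hEG := EG (n-1) J _ (G.induce s) hcard' hfree'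
    have hsplit := ecard_split_one G s v (fun z hz => by simpa [hs] using hz)
    have hdegv : G.degree v ≤ n - 1 := by
      have := SimpleGraph.degree_lt_card_verts (G := G) v
      omega
    have := SA J n hJ (by omega) (by omega)
    omega
  push_neg at hbig
  by_cases hlow : ∃ x, G.degree x ≤ J+1
  · obtain ⟨x, hxd⟩ := hlow
    have hx1 : 1 ≤ G.degree x := by have := hno x; omega
    obtain ⟨y, hy⟩ : ∃ y, G.Adj x y := by
      obtain ⟨y, hy⟩ := Finset.card_pos.1 (show 0 < (G.neighborFinset x).card by
        rw [SimpleGraph.card_neighborFinset_eq_degree]; omega)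
      exact ⟨y, (SimpleGraph.mem_neighborFinset _ _ _).1 hy⟩
    set s : Set V := {z : V | ¬ (z = x ∨ z = y)} with hs
    have hxy : x ≠ y := hy.ne
    have hcard' : Fintype.card ↥s = n - 2 := by
      show Fintype.card ↥({z : V | ¬ (z = x ∨ z = y)}) = n - 2
      rw [← Nat.card_eq_fintype_card, card_ne_two x y hxy, hcard]
    have hfree' : ¬ HasMatching (G.induce s) (J+1) := by
      rintro ⟨p, hp1, hp2⟩
      set q : Fin (J+1) → V × V := fun i => (((p i).1 : V), ((p i).2 : V)) with hq
      have hq1 : ∀ i, G.Adj (q i).1 (q i).2 := fun i => by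
        have := hp1 i; simpa [hq] using this
      have hq2 : ∀ i j, i ≠ j → (q i).1 ≠ (q j).1 ∧ (q i).1 ≠ (q j).2 ∧
          (q i).2 ≠ (q j).1 ∧ (q i).2 ≠ (q j).2 := by
        intro i j hij
        have := hp2 i j hij
        refine ⟨fun h => this.1 (Subtype.ext h), fun h => this.2.1 (Subtype.ext h),
          fun h => this.2.2.1 (Subtype.ext h), fun h => this.2.2.2 (Subtype.ext h)⟩
      refine hfree (HasMatching.extend q hq1 hq2 x y hy ?_ ?_)
      · intro i
        have g1 : ¬(((p i).1 : V) = x ∨ ((p i).1 : V) = y) := (p i).1.2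
        have g2 : ¬(((p i).2 : V) = x ∨ ((p i).2 : V) = y) := (p i).2.2
        exact ⟨fun h => g1 (Or.inl h.symm), fun h => g2 (Or.inl h.symm)⟩
      · intro i
        have g1 : ¬(((p i).1 : V) = x ∨ ((p i).1 : V) = y) := (p i).1.2
        have g2 : ¬(((p i).2 : V) = x ∨ ((p i).2 : V) = y) := (p i).2.2
        exact ⟨fun h => g1 (Or.inr h.symm), fun h => g2 (Or.inr h.symm)⟩
    have hEG := EG (n-2) J _ (G.induce s) hcard' hfree'
    have hsplit := ecard_split_two G s x y (fun z hz => by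
      have : ¬ ¬ (z = x ∨ z = y) := hz
      tauto)
    have hdegy : G.degree y ≤ 2*(J+1) := by have := hbig y; omega
    have := SB J n hJ (by omega) (by omega)
    omega
  push_neg at hlow
  exfalso
  exact hfree (minDegree_matching G (J+1+1) (by omega) (fun v => by have := hlow v; omega))

/-- isomorphism from graph equality -/
def isoOfEq {V : Type} {G H : SimpleGraph V} (h : G = H) : G ≃g H := h ▸ (SimpleGraph.Iso.refl :  G ≃g G)

theorem mainthm (n : ℕ) : ∀ (K : ℕ), 1 ≤ K → 2*K+1 ≤ n → 2*n ≤ 5*K+2 →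
    ∀ (G : SimpleGraph (Fin n)), ¬ HasMatching G (K+1) →
    G.edgeSet.ncard ≤ (2*K+1).choose 2 ∧
    (G.edgeSet.ncard = (2*K+1).choose 2 ↔ Nonempty (G ≃g cliqueUnion n (2*K+1))) := by
  induction n using Nat.strong_induction_on with
  | _ n IH =>
  intro K hK hn1 hn2 G hfree
  have hcard : Fintype.card (Fin n) = n := Fintype.card_fin n
  have hbound : G.edgeSet.ncard ≤ (2*K+1).choose 2 := by
    have := EG n K (Fin n) G hcard hfree
    rwa [ARmax K n hK hn1 hn2] at this
  refine ⟨hbound, ?_, ?_⟩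
  · intro heq
    rcases eq_or_lt_of_le hn1 with hbase | hstep
    · -- n = 2K+1 : complete graph
      have htop : G = ⊤ := eq_top_of_ecard G (by rw [heq, hcard, ← hbase])
      have hcu : cliqueUnion n (2*K+1) = (⊤ : SimpleGraph (Fin n)) := by
        rw [hbase]
        exact cliqueUnion_eq_top n
      exact ⟨isoOfEq (htop.trans hcu.symm)⟩
    · -- n ≥ 2K+2
      have hK2 : 2 ≤ K := by omega
      obtain ⟨J, rfl⟩ : ∃ J, K = J+1 := ⟨K-1, by omega⟩
      have hiso : ∃ x, G.degree x = 0 := by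
        by_contra hno
        push_neg at hno
        have := strict_step n J (by omega) (by omega) (by omega) (Fin n) G hcard hfree hno
        omega
      obtain ⟨x, hx⟩ := hiso
      set s : Set (Fin n) := {z : Fin n | z ≠ x} with hs
      have hcard' : Fintype.card ↥s = n - 1 := by
        show Fintype.card ↥({z : Fin n | z ≠ x}) = n - 1
        rw [← Nat.card_eq_fintype_card, card_ne_one, hcard]
      have ee : ↥s ≃ Fin (n-1) := Fintype.equivFinOfCardEq hcard'
      set G'' : SimpleGraph (Fin (n-1)) := SimpleGraph.comap (⇑ee.symm) (G.induce s) with hG''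
      have hiso2 : G'' ≃g G.induce s := by
        exact SimpleGraph.Iso.comap ee.symm (G.induce s)
      have hfree'' : ¬ HasMatching G'' (J+1+1) := by
        intro h
        refine hfree (hasMatching_induce (s := s) ?_)
        exact HasMatching.map (⇑ee.symm) ee.symm.injective (fun a b hab => by
          rw [hG''] at h
          exact hab) h
      have hecard'' : G''.edgeSet.ncard = G.edgeSet.ncard := by
        rw [ecard_eq_of_iso hiso2, ← ecard_isolated G x hx]
      have hIH := IH (n-1) (by omega) (J+1) (by omega) (by omega) (by omega) G'' hfree''
      have hiso3 := (hIH.2).1 (by rw [hecard'']; exact heq)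
      obtain ⟨φ⟩ := hiso3
      exact iso_extend hcard (by omega) G x (not_adj_of_degree_zero G x hx) ee φ
  · rintro ⟨φ⟩
    rw [ecard_eq_of_iso φ, ecard_cliqueUnion n (2*K+1) (by omega)]


end Proofs

/-- if `k ≥ 2`, `2k - 1 ≤ n < (5k-2)/2` and `G` on `n` vertices has no `k`
pairwise disjoint edges, then `e(G) ≤ C(2k-1,2)`, with equality iff
`G ≅ K_{2k-1} ∪ (n-2k+1)K_1`. -/
theorem stmt9 {n k : ℕ} (hk : 2 ≤ k) (hn1 : 2 * k - 1 ≤ n) (hn2 : 2 * n < 5 * k - 2)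
    (G : SimpleGraph (Fin n)) (hfree : ¬ HasMatching G k) :
    G.edgeSet.ncard ≤ Nat.choose (2 * k - 1) 2 ∧
    (G.edgeSet.ncard = Nat.choose (2 * k - 1) 2 ↔
      Nonempty (G ≃g cliqueUnion n (2 * k - 1))) := by

  have hK : 1 ≤ k - 1 := by omega
  obtain ⟨K, hkK⟩ : ∃ K, k = K + 1 := ⟨k - 1, by omega⟩
  subst hkK
  have he : 2 * (K + 1) - 1 = 2 * K + 1 := by omega
  rw [he]
  exact mainthm n K (by omega) (by omega) (by omega) G hfree


end
end

section
/- The complete split graph S_{n,k} contains no copy of the k-fan F_k = K_1 ∇ kK_2 (k triangles sharing exactly one common vertex) as a subgraph, for all n > k ≥ 1. -/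
open Matrix

noncomputable section
open scoped Classical

/-- for `n > k ≥ 1`, the complete split graph `S_{n,k}` contains no copy of
the `k`-fan `F_k` as a subgraph. -/
theorem stmt10 (n k : ℕ) (hk : 1 ≤ k) (hn : k < n) :
    FanFree (splitGraph n k) k := by
  rintro ⟨f, hf, hadj⟩
  have hpos : 0 < 2 * k + 1 := by omega
  have he1 : ∀ m : Fin k, 2 * m.val + 1 < 2 * k + 1 := fun m => by omega
  have he2 : ∀ m : Fin k, 2 * m.val + 2 < 2 * k + 1 := fun m => by omega
  set z : Fin (2*k+1) := ⟨0, hpos⟩ with hzdef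
  set e1 : Fin k → Fin (2*k+1) := fun m => ⟨2*m.val+1, he1 m⟩ with he1def
  set e2 : Fin k → Fin (2*k+1) := fun m => ⟨2*m.val+2, he2 m⟩ with he2def
  have hz0 : z = (0 : Fin (2*k+1)) := by
    apply Fin.ext; simp [hzdef]
  -- adjacency facts in the fan
  have adjz1 : ∀ m, (fan k).Adj z (e1 m) := by
    intro m
    refine ⟨?_, Or.inl hz0⟩
    simp only [hzdef, he1def, ne_eq, Fin.mk.injEq]
    omega
  have adjz2 : ∀ m, (fan k).Adj z (e2 m) := by
    intro m
    refine ⟨?_, Or.inl hz0⟩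
    simp only [hzdef, he2def, ne_eq, Fin.mk.injEq]
    omega
  have adj12 : ∀ m, (fan k).Adj (e1 m) (e2 m) := by
    intro m
    refine ⟨?_, Or.inr (Or.inr ?_)⟩
    · simp only [he1def, he2def, ne_eq, Fin.mk.injEq]; omega
    · simp only [he1def, he2def]; omega
  set A : Fin k → Fin n := fun m => f (e1 m) with hA
  set B : Fin k → Fin n := fun m => f (e2 m) with hB
  set C : Fin n := f z with hC
  -- distinctness
  have hAA : ∀ m m', A m = A m' → m = m' := by
    intro m m' h
    have := hf h
    simp only [he1def, Fin.mk.injEq] at this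
    exact Fin.ext (by omega)
  have hBB : ∀ m m', B m = B m' → m = m' := by
    intro m m' h
    have := hf h
    simp only [he2def, Fin.mk.injEq] at this
    exact Fin.ext (by omega)
  have hAB : ∀ m m', A m ≠ B m' := by
    intro m m' h
    have := hf h
    simp only [he1def, he2def, Fin.mk.injEq] at this
    omega
  have hAC : ∀ m, A m ≠ C := by
    intro m h
    have := hf h
    simp only [he1def, hzdef, Fin.mk.injEq] at this
    omega
  have hBC : ∀ m, B m ≠ C := by
    intro m h
    have := hf h
    simp only [he2def, hzdef, Fin.mk.injEq] at this
    omega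
  by_cases hCk : C.val < k
  · -- center in the clique: pick one small endpoint per edge, plus C: k+1 vertices with val < k
    have hsmall : ∀ m, (A m).val < k ∨ (B m).val < k := fun m => (hadj _ _ (adj12 m)).2
    set g : Fin k → Fin n := fun m => if (A m).val < k then A m else B m with hg
    have hgk : ∀ m, (g m).val < k := by
      intro m
      simp only [hg]
      split
      · assumption
      · rcases hsmall m with h | h
        · contradiction
        · exact h
    have hgC : ∀ m, g m ≠ C := by
      intro m
      simp only [hg]; split
      · exact hAC m
      · exact hBC m
    have hgg : ∀ m m', g m = g m' → m = m' := by
      intro m m' h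
      simp only [hg] at h
      split at h <;> split at h
      · exact hAA _ _ h
      · exact absurd h (hAB m m')
      · exact absurd h.symm (hAB m' m)
      · exact hBB _ _ h
    set F : Fin (k+1) → Fin k := fun i =>
      if hi : i.val < k then ⟨(g ⟨i.val, hi⟩).val, hgk _⟩ else ⟨C.val, hCk⟩ with hF
    have hFinj : Function.Injective F := by
      intro i j h
      simp only [hF] at h
      split at h <;> split at h
      · simp only [Fin.mk.injEq] at h
        have := hgg _ _ (Fin.ext h)
        simp only [Fin.mk.injEq] at this
        exact Fin.ext this
      · simp only [Fin.mk.injEq] at h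
        exact absurd (Fin.ext h) (hgC _)
      · simp only [Fin.mk.injEq] at h
        exact absurd (Fin.ext h.symm) (hgC _)
      · omega
    have := Fintype.card_le_of_injective F hFinj
    simp at this
  · -- center outside the clique: both endpoints of every edge lie in the clique
    have hAk : ∀ m, (A m).val < k := by
      intro m
      rcases (hadj _ _ (adjz1 m)).2 with h | h
      · exact absurd h hCk
      · exact h
    have hBk : ∀ m, (B m).val < k := by
      intro m
      rcases (hadj _ _ (adjz2 m)).2 with h | h
      · exact absurd h hCk
      · exact h
    have hk0 : (0 : ℕ) < k := hk
    set F : Fin (k+1) → Fin k := fun i =>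
      if hi : i.val < k then ⟨(A ⟨i.val, hi⟩).val, hAk _⟩ else ⟨(B ⟨0, hk0⟩).val, hBk _⟩ with hF
    have hFinj : Function.Injective F := by
      intro i j h
      simp only [hF] at h
      split at h <;> split at h
      · simp only [Fin.mk.injEq] at h
        have := hAA _ _ (Fin.ext h)
        simp only [Fin.mk.injEq] at this
        exact Fin.ext this
      · simp only [Fin.mk.injEq] at h
        exact absurd (Fin.ext h) (hAB _ _)
      · simp only [Fin.mk.injEq] at h
        exact absurd (Fin.ext h.symm) (hAB _ _)
      · omega
    have := Fintype.card_le_of_injective F hFinj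
    simp at this

end
end

section
/- Let k ≥ 2, and let H be a graph on d vertices with d ≥ (5k-2)/2 that is kK_2-free and has at least (k-2)d + k + 2 edges. Then H contains a matching of size k - 1. -/
open Matrix

noncomputable section
open scoped Classical

private lemma hm_snoc {V : Type*} {G : SimpleGraph V} {n : ℕ} {p : Fin n → V × V}
    (hadj : ∀ i, G.Adj (p i).1 (p i).2)
    (hpd : ∀ i j, i ≠ j → (p i).1 ≠ (p j).1 ∧ (p i).1 ≠ (p j).2 ∧
      (p i).2 ≠ (p j).1 ∧ (p i).2 ≠ (p j).2)
    {u v : V} (huv : G.Adj u v)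
    (hfresh : ∀ j, (p j).1 ≠ u ∧ (p j).2 ≠ u ∧ (p j).1 ≠ v ∧ (p j).2 ≠ v) :
    HasMatching G (n + 1) := by
  refine ⟨Fin.snoc p (u, v), ?_, ?_⟩
  · intro i
    induction i using Fin.lastCases with
    | last => simpa using huv
    | cast j => simpa using hadj j
  · intro i j hij
    induction i using Fin.lastCases with
    | last =>
      induction j using Fin.lastCases with
      | last => exact absurd rfl hij
      | cast j' =>
        simp only [Fin.snoc_last, Fin.snoc_castSucc]
        exact ⟨(hfresh j').1.symm, (hfresh j').2.1.symm,
          (hfresh j').2.2.1.symm, (hfresh j').2.2.2.symm⟩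
    | cast i' =>
      induction j using Fin.lastCases with
      | last =>
        simp only [Fin.snoc_last, Fin.snoc_castSucc]
        exact ⟨(hfresh i').1, (hfresh i').2.2.1, (hfresh i').2.1, (hfresh i').2.2.2⟩
      | cast j' =>
        simp only [Fin.snoc_castSucc]
        exact hpd i' j' (fun h => hij (congrArg Fin.castSucc h))

private lemma hm_swap {V : Type*} {G : SimpleGraph V} {n : ℕ} {p : Fin n → V × V}
    (hadj : ∀ i, G.Adj (p i).1 (p i).2)
    (hpd : ∀ i j, i ≠ j → (p i).1 ≠ (p j).1 ∧ (p i).1 ≠ (p j).2 ∧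
      (p i).2 ≠ (p j).1 ∧ (p i).2 ≠ (p j).2)
    (i : Fin n) {a o w u : V}
    (hao : (a = (p i).1 ∧ o = (p i).2) ∨ (a = (p i).2 ∧ o = (p i).1))
    (haw : G.Adj a w) (hou : G.Adj o u)
    (hw : ∀ j, (p j).1 ≠ w ∧ (p j).2 ≠ w)
    (hu : ∀ j, (p j).1 ≠ u ∧ (p j).2 ≠ u)
    (hwu : w ≠ u) : HasMatching G (n + 1) := by
  classical
  set q := Function.update p i (a, w) with hq
  have hao' : a ≠ o := by
    rcases hao with ⟨h1, h2⟩ | ⟨h1, h2⟩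
    · rw [h1, h2]; exact (hadj i).ne
    · rw [h1, h2]; exact (hadj i).ne'
  have haend : a = (p i).1 ∨ a = (p i).2 := by tauto
  have hoend : o = (p i).1 ∨ o = (p i).2 := by tauto
  have hqi : q i = (a, w) := by simp [hq]
  have hqj : ∀ j, j ≠ i → q j = p j := by
    intro j hj; simp [hq, Function.update_of_ne hj]
  have hqadj : ∀ j, G.Adj (q j).1 (q j).2 := by
    intro j
    by_cases h : j = i
    · subst h; rw [hqi]; exact haw
    · rw [hqj j h]; exact hadj j
  have key1 : ∀ j, j ≠ i → (p j).1 ≠ a ∧ (p j).2 ≠ a := by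
    intro j hj
    rcases haend with h | h <;> rw [h]
    · exact ⟨(hpd j i hj).1, (hpd j i hj).2.2.1⟩
    · exact ⟨(hpd j i hj).2.1, (hpd j i hj).2.2.2⟩
  have key2 : ∀ j, j ≠ i → (p j).1 ≠ o ∧ (p j).2 ≠ o := by
    intro j hj
    rcases hoend with h | h <;> rw [h]
    · exact ⟨(hpd j i hj).1, (hpd j i hj).2.2.1⟩
    · exact ⟨(hpd j i hj).2.1, (hpd j i hj).2.2.2⟩
  have hqpd : ∀ j j', j ≠ j' → (q j).1 ≠ (q j').1 ∧ (q j).1 ≠ (q j').2 ∧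
      (q j).2 ≠ (q j').1 ∧ (q j).2 ≠ (q j').2 := by
    intro j j' hjj'
    by_cases h : j = i <;> by_cases h' : j' = i
    · exact absurd (h.trans h'.symm) hjj'
    · subst h; rw [hqi, hqj j' h']
      exact ⟨fun e => (key1 j' h').1 e.symm, fun e => (key1 j' h').2 e.symm,
        fun e => (hw j').1 e.symm, fun e => (hw j').2 e.symm⟩
    · subst h'; rw [hqi, hqj j h]
      exact ⟨(key1 j h).1, (hw j).1, (key1 j h).2, (hw j).2⟩
    · rw [hqj j h, hqj j' h']; exact hpd j j' hjj'
  have hofresh : ∀ j, (q j).1 ≠ o ∧ (q j).2 ≠ o ∧ (q j).1 ≠ u ∧ (q j).2 ≠ u := by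
    intro j
    by_cases h : j = i
    · rw [h, hqi]
      have hwo : w ≠ o := by
        rcases hoend with ho | ho <;> rw [ho]
        · exact fun e => (hw i).1 e.symm
        · exact fun e => (hw i).2 e.symm
      have hau : a ≠ u := by
        rcases haend with ha | ha <;> rw [ha]
        · exact (hu i).1
        · exact (hu i).2
      exact ⟨hao', hwo, hau, hwu⟩
    · rw [hqj j h]
      exact ⟨(key2 j h).1, (key2 j h).2, (hu j).1, (hu j).2⟩
  exact hm_snoc hqadj hqpd hou hofresh

/-- if `k ≥ 2`, `H` has `d ≥ (5k-2)/2` vertices, is `kK₂`-free and has at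
least `(k-2)d + k + 2` edges, then `H` contains a matching of size `k - 1`. -/
theorem stmt15 {d k : ℕ} (hk : 2 ≤ k) (hd : 5 * k - 2 ≤ 2 * d)
    (H : SimpleGraph (Fin d)) (hfree : ¬ HasMatching H k)
    (hcard : (k - 2) * d + k + 2 ≤ H.edgeSet.ncard) :
    HasMatching H (k - 1) := by
  by_contra hno
  classical
  -- maximal matching size m
  set P : ℕ → Prop := fun n => HasMatching H n with hP
  have h0 : P 0 := ⟨Fin.elim0, fun i => i.elim0, fun i => i.elim0⟩
  set m := Nat.findGreatest P (k - 2) with hmdef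
  have hm : P m := Nat.findGreatest_spec (Nat.zero_le _) h0
  have hmk : m ≤ k - 2 := Nat.findGreatest_le _
  have hmax : ¬ HasMatching H (m + 1) := by
    rcases lt_or_eq_of_le hmk with h | h
    · exact Nat.findGreatest_is_greatest (Nat.lt_succ_self m) (by omega)
    · intro hmm
      have : m + 1 = k - 1 := by omega
      rw [this] at hmm
      exact hno hmm
  obtain ⟨p, hadj, hpd⟩ := hm
  -- the set of matched vertices
  set S : Finset (Fin d) :=
    Finset.univ.image (fun x : Fin m × Bool => if x.2 then (p x.1).1 else (p x.1).2) with hS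
  have hmemS : ∀ v : Fin d, v ∈ S ↔ ∃ i, (p i).1 = v ∨ (p i).2 = v := by
    intro v
    simp only [hS, Finset.mem_image, Finset.mem_univ, true_and]
    constructor
    · rintro ⟨⟨i, b⟩, hb⟩
      cases b
      · exact ⟨i, Or.inr hb⟩
      · exact ⟨i, Or.inl hb⟩
    · rintro ⟨i, h | h⟩
      · exact ⟨(i, true), h⟩
      · exact ⟨(i, false), h⟩
  have hcardS : S.card = 2 * m := by
    rw [hS, Finset.card_image_of_injective _ ?_, Finset.card_univ]
    · simp [Fintype.card_prod, mul_comm]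
    · rintro ⟨i, b⟩ ⟨j, c⟩ h
      simp only at h
      by_cases hij : i = j
      · subst hij
        cases b <;> cases c <;> simp_all
        · exact absurd h.symm (hadj i).ne
        · exact absurd h (hadj i).ne
      · exfalso
        have := hpd i j hij
        cases b <;> cases c <;> simp_all
  -- every edge meets S
  have hcover : ∀ u v : Fin d, H.Adj u v → u ∈ S ∨ v ∈ S := by
    intro u v huv
    by_contra hcon
    push_neg at hcon
    obtain ⟨hu, hv⟩ := hcon
    rw [hmemS] at hu hv
    push_neg at hu hv
    refine hmax (hm_snoc hadj hpd huv ?_)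
    intro j
    exact ⟨(hu j).1, (hu j).2, (hv j).1, (hv j).2⟩
  have hSd : S.card ≤ d := by
    simpa using Finset.card_le_card (Finset.subset_univ S)
  have hUcard : Sᶜ.card = d - 2 * m := by
    rw [Finset.card_compl, hcardS]; simp
  -- key claim: few edges from each matching edge to the unmatched set
  set Pi : Fin m → Finset (Fin d × Fin d) := fun i =>
    Finset.univ.filter (fun q : Fin d × Fin d =>
      (q.1 = (p i).1 ∨ q.1 = (p i).2) ∧ q.2 ∉ S ∧ H.Adj q.1 q.2) with hPi
  have hmemPi : ∀ (i : Fin m) (q : Fin d × Fin d), q ∈ Pi i ↔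
      (q.1 = (p i).1 ∨ q.1 = (p i).2) ∧ q.2 ∉ S ∧ H.Adj q.1 q.2 := by
    intro i q; simp [hPi]
  have hfreshS : ∀ w : Fin d, w ∉ S → ∀ j, (p j).1 ≠ w ∧ (p j).2 ≠ w := by
    intro w hwS j
    rw [hmemS] at hwS
    push_neg at hwS
    exact hwS j
  have hkey : ∀ i : Fin m, (Pi i).card ≤ d - 2 * m := by
    intro i
    have hdm : 2 ≤ d - 2 * m := by omega
    by_cases hB : ∃ u, u ∉ S ∧ H.Adj (p i).1 u ∧ H.Adj (p i).2 u
    · obtain ⟨u, huS, hau, hbu⟩ := hB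
      have hsub : Pi i ⊆ {((p i).1, u), ((p i).2, u)} := by
        intro q hq
        rw [hmemPi] at hq
        obtain ⟨hq1, hq2, hq3⟩ := hq
        have hq2u : q.2 = u := by
          by_contra hne
          refine hmax ?_
          rcases hq1 with h1 | h1
          · exact hm_swap hadj hpd i (Or.inl ⟨rfl, rfl⟩) (h1 ▸ hq3) hbu
              (hfreshS q.2 hq2) (hfreshS u huS) hne
          · exact hm_swap hadj hpd i (Or.inr ⟨rfl, rfl⟩) (h1 ▸ hq3) hau
              (hfreshS q.2 hq2) (hfreshS u huS) hne
        simp only [Finset.mem_insert, Finset.mem_singleton]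
        rcases hq1 with h1 | h1
        · exact Or.inl (Prod.ext h1 hq2u)
        · exact Or.inr (Prod.ext h1 hq2u)
      calc (Pi i).card ≤ ({((p i).1, u), ((p i).2, u)} : Finset (Fin d × Fin d)).card :=
            Finset.card_le_card hsub
        _ ≤ 2 := Finset.card_insert_le _ _ |>.trans (by simp)
        _ ≤ d - 2 * m := hdm
    · push_neg at hB
      have : (Pi i).card ≤ Sᶜ.card := by
        refine Finset.card_le_card_of_injOn (fun q => q.2) ?_ ?_
        · intro q hq
          rw [Finset.mem_coe, hmemPi] at hq
          simpa [Finset.mem_compl] using hq.2.1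
        · intro q hq q' hq' hqq'
          rw [Finset.mem_coe, hmemPi] at hq hq'
          simp only at hqq'
          have h1 : q.1 = q'.1 := by
            rcases hq.1 with h | h <;> rcases hq'.1 with h' | h'
            · rw [h, h']
            · exfalso
              exact hB q.2 hq.2.1 (h ▸ hq.2.2) (hqq' ▸ h' ▸ hq'.2.2)
            · exfalso
              exact hB q.2 hq.2.1 (hqq' ▸ h' ▸ hq'.2.2) (h ▸ hq.2.2)
            · rw [h, h']
          exact Prod.ext h1 hqq'
      omega
  -- counting
  set D : Finset (Fin d × Fin d) :=
    Finset.univ.filter (fun q : Fin d × Fin d => H.Adj q.1 q.2) with hD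
  have hDcard : 2 * H.edgeFinset.card = D.card := by
    rw [SimpleGraph.two_mul_card_edgeFinset]
  set DSS := D.filter (fun q => q.1 ∈ S ∧ q.2 ∈ S) with hDSS
  set DSU := D.filter (fun q => q.1 ∈ S ∧ q.2 ∉ S) with hDSU
  set DUS := D.filter (fun q => q.1 ∉ S ∧ q.2 ∈ S) with hDUS
  have hsplit : D ⊆ DSS ∪ DSU ∪ DUS := by
    intro q hq
    have hadjq : H.Adj q.1 q.2 := by
      rw [hD] at hq; simpa using hq
    simp only [hDSS, hDSU, hDUS, Finset.mem_union, Finset.mem_filter]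
    by_cases h1 : q.1 ∈ S <;> by_cases h2 : q.2 ∈ S
    · exact Or.inl (Or.inl ⟨hq, h1, h2⟩)
    · exact Or.inl (Or.inr ⟨hq, h1, h2⟩)
    · exact Or.inr ⟨hq, h1, h2⟩
    · rcases hcover q.1 q.2 hadjq with h | h <;> [exact absurd h h1; exact absurd h h2]
  have hSS : DSS.card ≤ 2 * m * (2 * m) := by
    have : DSS ⊆ S ×ˢ S := by
      intro q hq
      rw [hDSS, Finset.mem_filter] at hq
      exact Finset.mem_product.mpr hq.2
    calc DSS.card ≤ (S ×ˢ S).card := Finset.card_le_card this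
      _ = 2 * m * (2 * m) := by rw [Finset.card_product, hcardS]
  have hSU : DSU.card ≤ m * (d - 2 * m) := by
    have hsub : DSU ⊆ Finset.univ.biUnion Pi := by
      intro q hq
      rw [hDSU, Finset.mem_filter, hD, Finset.mem_filter] at hq
      obtain ⟨⟨-, hadjq⟩, hq1, hq2⟩ := hq
      rw [hmemS] at hq1
      obtain ⟨i, hi⟩ := hq1
      refine Finset.mem_biUnion.mpr ⟨i, Finset.mem_univ i, ?_⟩
      rw [hmemPi]
      rcases hi with h | h
      · exact ⟨Or.inl h.symm, hq2, hadjq⟩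
      · exact ⟨Or.inr h.symm, hq2, hadjq⟩
    calc DSU.card ≤ (Finset.univ.biUnion Pi).card := Finset.card_le_card hsub
      _ ≤ ∑ i : Fin m, (Pi i).card := Finset.card_biUnion_le
      _ ≤ ∑ _i : Fin m, (d - 2 * m) := Finset.sum_le_sum (fun i _ => hkey i)
      _ = m * (d - 2 * m) := by simp [mul_comm]
  have hUS : DUS.card = DSU.card := by
    refine Finset.card_bij (fun q _ => q.swap) ?_ ?_ ?_
    · intro q hq
      rw [hDUS, Finset.mem_filter, hD, Finset.mem_filter] at hq
      rw [hDSU, Finset.mem_filter, hD, Finset.mem_filter]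
      exact ⟨⟨Finset.mem_univ _, hq.1.2.symm⟩, hq.2.2, hq.2.1⟩
    · intro q _ q' _ h
      exact Prod.swap_injective h
    · intro q hq
      refine ⟨q.swap, ?_, by simp⟩
      rw [hDSU, Finset.mem_filter, hD, Finset.mem_filter] at hq
      rw [hDUS, Finset.mem_filter, hD, Finset.mem_filter]
      exact ⟨⟨Finset.mem_univ _, hq.1.2.symm⟩, hq.2.2, hq.2.1⟩
  have htot : D.card ≤ 2 * m * (2 * m) + 2 * (m * (d - 2 * m)) := by
    calc D.card ≤ (DSS ∪ DSU ∪ DUS).card := Finset.card_le_card hsplit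
      _ ≤ (DSS ∪ DSU).card + DUS.card := Finset.card_union_le _ _
      _ ≤ DSS.card + DSU.card + DUS.card := by
          have := Finset.card_union_le DSS DSU
          omega
      _ ≤ 2 * m * (2 * m) + 2 * (m * (d - 2 * m)) := by
          rw [hUS]; omega
  have hecard : H.edgeSet.ncard = H.edgeFinset.card := by
    rw [SimpleGraph.edgeFinset, Set.ncard_eq_toFinset_card']
  rw [hecard] at hcard
  have h2m : 2 * m ≤ d := by omega
  have hmk2 : m * d ≤ (k - 2) * d := Nat.mul_le_mul_right d hmk
  have e1 : m * d = m * (d - 2 * m) + m * (2 * m) := by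
    rw [← Nat.mul_add, Nat.sub_add_cancel h2m]
  have e2 : 2 * m * (2 * m) = 2 * (m * (2 * m)) := by ring
  omega

end
end

section
/- Let G be a graph, v a vertex of G, and suppose there are at least k vertices outside N(v) ∪ {v} or equal to v, each adjacent to every vertex of N(v). If G is F_k-free, then every vertex of N(v) has degree at most k - 1 in the induced subgraph G[N(v)]. -/
open Matrix

noncomputable section
open scoped Classical

/-- if there are `k` distinct vertices outside `N(v)` each adjacent to every
vertex of `N(v)`, and `G` is `F_k`-free, then every vertex of `N(v)` has degree at most
`k - 1` in `G[N(v)]`. -/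
theorem stmt16 {V : Type*} (G : SimpleGraph V) (v : V) (k : ℕ)
    (w : Fin k → V) (hinj : Function.Injective w)
    (hout : ∀ i, w i ∉ G.neighborSet v)
    (hdom : ∀ i, ∀ u ∈ G.neighborSet v, G.Adj (w i) u)
    (hfree : FanFree G k) :
    ∀ u ∈ G.neighborSet v,
      {x | x ∈ G.neighborSet v ∧ G.Adj u x}.ncard ≤ k - 1 := by
  intro u hu
  by_contra hcard
  push_neg at hcard
  set S := {x | x ∈ G.neighborSet v ∧ G.Adj u x} with hSdef
  rcases Nat.eq_zero_or_pos k with hk | hk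
  · subst hk
    refine hfree ⟨fun _ => v, ?_, ?_⟩
    · intro a b _
      have ha := a.isLt; have hb := b.isLt
      exact Fin.ext (by omega)
    · intro a b hab
      have ha := a.isLt; have hb := b.isLt
      exact absurd (Fin.ext (by omega)) hab.1
  have hne : S.ncard ≠ 0 := by omega
  have hF : S.Finite := Set.finite_of_ncard_ne_zero hne
  have hkle : k ≤ S.ncard := by omega
  obtain ⟨t, hts, htcard⟩ := Set.exists_subset_card_eq hkle
  have htF : t.Finite := hF.subset hts
  have hcardF : htF.toFinset.card = k := by
    rwa [Set.ncard_eq_toFinset_card _ htF] at htcard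
  let e : htF.toFinset ≃ Fin k := htF.toFinset.equivFinOfCardEq hcardF
  let x : Fin k → V := fun i => ((e.symm i : htF.toFinset) : V)
  have hxS : ∀ i, x i ∈ S := by
    intro i
    exact hts (htF.mem_toFinset.mp (e.symm i).2)
  have hxinj : Function.Injective x := by
    intro i j hij
    exact e.symm.injective (Subtype.ext hij)
  have hxN : ∀ i, x i ∈ G.neighborSet v := fun i => (hxS i).1
  have hux : ∀ i, G.Adj u (x i) := fun i => (hxS i).2
  -- key distinctness
  have huw : ∀ i, u ≠ w i := fun i h => hout i (h ▸ hu)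
  have hxw : ∀ i j, x i ≠ w j := fun i j h => hout j (h ▸ hxN i)
  have hux' : ∀ i, u ≠ x i := fun i => (hux i).ne
  -- the embedding of the fan
  let f : Fin (2 * k + 1) → V := fun j =>
    if h0 : j.val = 0 then u
    else if (j.val - 1) % 2 = 0 then x ⟨(j.val - 1) / 2, by have := j.isLt; omega⟩
    else w ⟨(j.val - 1) / 2, by have := j.isLt; omega⟩
  refine hfree ⟨f, ?_, ?_⟩
  · intro a b hab
    have ha := a.isLt
    have hb := b.isLt
    by_cases h0a : a.val = 0 <;> by_cases h0b : b.val = 0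
    · exact Fin.ext (h0a.trans h0b.symm)
    · simp only [f, dif_pos h0a, dif_neg h0b] at hab
      split_ifs at hab
      · exact absurd hab (hux' _)
      · exact absurd hab (huw _)
    · simp only [f, dif_neg h0a, dif_pos h0b] at hab
      split_ifs at hab
      · exact absurd hab.symm (hux' _)
      · exact absurd hab.symm (huw _)
    · simp only [f, dif_neg h0a, dif_neg h0b] at hab
      split_ifs at hab with h1 h2 h2
      · have := hxinj hab
        have := Fin.mk.injEq .. ▸ this
        exact Fin.ext (by omega)
      · exact absurd hab (hxw _ _)
      · exact absurd hab.symm (hxw _ _)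
      · have := hinj hab
        simp only [Fin.mk.injEq] at this
        exact Fin.ext (by omega)
  · rintro a b ⟨hne, hcase⟩
    have ha := a.isLt
    have hb := b.isLt
    have hAdju : ∀ (j : Fin (2 * k + 1)), j.val ≠ 0 → G.Adj u (f j) := by
      intro j hj
      simp only [f, dif_neg hj]
      split_ifs
      · exact hux _
      · exact (hdom _ u hu).symm
    rcases hcase with h | h | h
    · have h0a : a.val = 0 := by simp [h]
      have h0b : b.val ≠ 0 := fun hb0 => hne (Fin.ext (by omega))
      simp only [f, dif_pos h0a]
      exact hAdju b h0b
    · have h0b : b.val = 0 := by simp [h]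
      have h0a : a.val ≠ 0 := fun ha0 => hne (Fin.ext (by omega))
      simp only [f, dif_pos h0b]
      exact (hAdju a h0a).symm
    · -- same pair
      by_cases h0a : a.val = 0
      · simp only [f, dif_pos h0a]
        exact hAdju b (fun hb0 => hne (Fin.ext (by omega)))
      by_cases h0b : b.val = 0
      · simp only [f, dif_pos h0b]
        exact (hAdju a h0a).symm
      have hnev : a.val ≠ b.val := fun hh => hne (Fin.ext hh)
      simp only [f, dif_neg h0a, dif_neg h0b]
      split_ifs with h1 h2 h2
      · omega
      · have : ((⟨(a.val - 1) / 2, by omega⟩ : Fin k)) = ⟨(b.val - 1) / 2, by omega⟩ := by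
          simp only [Fin.mk.injEq]; omega
        rw [this]
        exact ((hdom _ _ (hxN _)).symm)
      · have : ((⟨(a.val - 1) / 2, by omega⟩ : Fin k)) = ⟨(b.val - 1) / 2, by omega⟩ := by
          simp only [Fin.mk.injEq]; omega
        rw [this]
        exact (hdom _ _ (hxN _))
      · omega

end
end

section
/- Let G be a kK_2-free graph (k ≥ 2) with a matching {r_1 s_1, ..., r_{k-1} s_{k-1}}, R = {r_i}, S = {s_i}, T = V(G) \ (R ∪ S). Then for each i, either N(r_i) ∩ T = ∅, or N(s_i) ∩ T = ∅, or N(r_i) ∩ T = N(s_i) ∩ T = {t_i} for a single vertex t_i ∈ T. -/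
open Matrix

noncomputable section
open scoped Classical

lemma key_matching {V : Type*} (G : SimpleGraph V) (k : ℕ) (hk : 2 ≤ k)
    (p : Fin (k - 1) → V × V)
    (hadj : ∀ i, G.Adj (p i).1 (p i).2)
    (hdisj : ∀ i j, i ≠ j → (p i).1 ≠ (p j).1 ∧ (p i).1 ≠ (p j).2 ∧
      (p i).2 ≠ (p j).1 ∧ (p i).2 ≠ (p j).2)
    (i : Fin (k - 1)) (u v : V)
    (hu : ∀ j, u ≠ (p j).1 ∧ u ≠ (p j).2)
    (hv : ∀ j, v ≠ (p j).1 ∧ v ≠ (p j).2)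
    (hau : G.Adj (p i).1 u) (hav : G.Adj (p i).2 v) (huv : u ≠ v) :
    HasMatching G k := by
  classical
  refine ⟨fun j => if h : (j : ℕ) < k - 1 then
      (if (j : ℕ) = (i : ℕ) then ((p i).1, u) else p ⟨j, h⟩) else ((p i).2, v), ?_, ?_⟩
  · intro j
    by_cases h : (j : ℕ) < k - 1
    · by_cases h2 : (j : ℕ) = (i : ℕ)
      · simp only [dif_pos h, if_pos h2]; exact hau
      · simp only [dif_pos h, if_neg h2]; exact hadj _
    · simp only [dif_neg h]; exact hav
  · intro a b hab
    have hval : (a : ℕ) ≠ (b : ℕ) := fun e => hab (Fin.ext e)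
    by_cases ha : (a : ℕ) < k - 1 <;> by_cases hb : (b : ℕ) < k - 1
    · simp only [dif_pos ha, dif_pos hb]
      by_cases ha2 : (a : ℕ) = (i : ℕ) <;> by_cases hb2 : (b : ℕ) = (i : ℕ)
      · omega
      · simp only [if_pos ha2, if_neg hb2]
        have hib : i ≠ ⟨b, hb⟩ := fun e => hb2 (congrArg Fin.val e).symm
        obtain ⟨e1, e2, _, _⟩ := hdisj i ⟨b, hb⟩ hib
        obtain ⟨e5, e6⟩ := hu ⟨b, hb⟩
        exact ⟨e1, e2, e5, e6⟩
      · simp only [if_neg ha2, if_pos hb2]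
        have hia : (⟨a, ha⟩ : Fin (k-1)) ≠ i := fun e => ha2 (congrArg Fin.val e)
        obtain ⟨e1, e2, e3, e4⟩ := hdisj ⟨a, ha⟩ i hia
        obtain ⟨e5, e6⟩ := hu ⟨a, ha⟩
        exact ⟨e1, e5.symm, e3, e6.symm⟩
      · simp only [if_neg ha2, if_neg hb2]
        have hne : (⟨a, ha⟩ : Fin (k-1)) ≠ ⟨b, hb⟩ := fun e => hval (Fin.mk.inj e)
        exact hdisj ⟨a, ha⟩ ⟨b, hb⟩ hne
    · simp only [dif_pos ha, dif_neg hb]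
      by_cases ha2 : (a : ℕ) = (i : ℕ)
      · simp only [if_pos ha2]
        exact ⟨(hadj i).ne, (hv i).1.symm, (hu i).2, huv⟩
      · simp only [if_neg ha2]
        have hia : (⟨a, ha⟩ : Fin (k-1)) ≠ i := fun e => ha2 (congrArg Fin.val e)
        obtain ⟨e1, e2, e3, e4⟩ := hdisj ⟨a, ha⟩ i hia
        exact ⟨e2, (hv ⟨a, ha⟩).1.symm, e4, (hv ⟨a, ha⟩).2.symm⟩
    · simp only [dif_neg ha, dif_pos hb]
      by_cases hb2 : (b : ℕ) = (i : ℕ)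
      · simp only [if_pos hb2]
        exact ⟨(hadj i).ne', (hu i).2.symm, (hv i).1, huv.symm⟩
      · simp only [if_neg hb2]
        have hib : i ≠ ⟨b, hb⟩ := fun e => hb2 (congrArg Fin.val e).symm
        obtain ⟨e1, e2, e3, e4⟩ := hdisj i ⟨b, hb⟩ hib
        exact ⟨e3, e4, (hv ⟨b, hb⟩).1, (hv ⟨b, hb⟩).2⟩
    · exfalso
      have := a.isLt
      have := b.isLt
      omega

/-- if `G` is `kK₂`-free (`k ≥ 2`) with matching edges `r_is_i` and
`T = V(G) \ (R ∪ S)`, then for each `i`, either `N(r_i) ∩ T = ∅`, or `N(s_i) ∩ T = ∅`,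
or `N(r_i) ∩ T = N(s_i) ∩ T = {t_i}` for a single vertex `t_i ∈ T`. -/
theorem stmt18 {V : Type*} (G : SimpleGraph V) (k : ℕ) (hk : 2 ≤ k)
    (hfree : ¬ HasMatching G k)
    (p : Fin (k - 1) → V × V)
    (hadj : ∀ i, G.Adj (p i).1 (p i).2)
    (hdisj : ∀ i j, i ≠ j → (p i).1 ≠ (p j).1 ∧ (p i).1 ≠ (p j).2 ∧
      (p i).2 ≠ (p j).1 ∧ (p i).2 ≠ (p j).2) :
    ∀ i : Fin (k - 1),
      (∀ t : V, (∀ j, t ≠ (p j).1 ∧ t ≠ (p j).2) → ¬ G.Adj (p i).1 t) ∨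
      (∀ t : V, (∀ j, t ≠ (p j).1 ∧ t ≠ (p j).2) → ¬ G.Adj (p i).2 t) ∨
      (∃ t0 : V, (∀ j, t0 ≠ (p j).1 ∧ t0 ≠ (p j).2) ∧
        ∀ t : V, (∀ j, t ≠ (p j).1 ∧ t ≠ (p j).2) →
          (G.Adj (p i).1 t ↔ t = t0) ∧ (G.Adj (p i).2 t ↔ t = t0)) := by
  intro i
  by_cases h1 : ∃ t, (∀ j, t ≠ (p j).1 ∧ t ≠ (p j).2) ∧ G.Adj (p i).1 t
  · by_cases h2 : ∃ t, (∀ j, t ≠ (p j).1 ∧ t ≠ (p j).2) ∧ G.Adj (p i).2 t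
    · obtain ⟨t1, ht1, ha1⟩ := h1
      obtain ⟨t2, ht2, ha2⟩ := h2
      have heq : t1 = t2 := by
        by_contra hne
        exact hfree (key_matching G k hk p hadj hdisj i t1 t2 ht1 ht2 ha1 ha2 hne)
      subst heq
      refine Or.inr (Or.inr ⟨t1, ht1, fun t ht => ⟨⟨fun hadjt => ?_, fun e => e ▸ ha1⟩,
        ⟨fun hadjt => ?_, fun e => e ▸ ha2⟩⟩⟩)
      · by_contra hne
        exact hfree (key_matching G k hk p hadj hdisj i t t1 ht ht1 hadjt ha2 hne)
      · by_contra hne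
        exact hfree (key_matching G k hk p hadj hdisj i t1 t ht1 ht ha1 hadjt (Ne.symm hne))
    · exact Or.inr (Or.inl fun t ht hadjt => h2 ⟨t, ht, hadjt⟩)
  · exact Or.inl fun t ht hadjt => h1 ⟨t, ht, hadjt⟩

end
end

section
/- For all real n and k with k ≥ 2 and n ≥ 2k^2 - 4k + 3, one has (n + 2k - 2 + sqrt((n+2k-2)^2 - 8k(k-1)))/2 ≥ n + 2k - 2 - 2k(k-1)/(n + 2k - 3). -/
open Matrix

noncomputable section
open scoped Classical

/-- the algebraic inequality
`(n + 2k - 2 + √((n+2k-2)² - 8k(k-1)))/2 ≥ n + 2k - 2 - 2k(k-1)/(n + 2k - 3)`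
for real `k ≥ 2` and `n ≥ 2k² - 4k + 3`. -/
theorem stmt19 (n k : ℝ) (hk : 2 ≤ k) (hn : 2 * k ^ 2 - 4 * k + 3 ≤ n) :
    n + 2 * k - 2 - 2 * k * (k - 1) / (n + 2 * k - 3) ≤
      (n + 2 * k - 2 + Real.sqrt ((n + 2 * k - 2) ^ 2 - 8 * k * (k - 1))) / 2 := by
  have hk1 : 0 < k - 1 := by linarith
  have ht : 2 * k * (k - 1) ≤ n + 2 * k - 3 := by nlinarith
  have ht0 : 0 < n + 2 * k - 3 := by nlinarith
  set t := n + 2 * k - 3 with htdef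
  set d := 4 * k * (k - 1) / t with hddef
  have hdt : d * t = 4 * k * (k - 1) := div_mul_cancel₀ _ (ne_of_gt ht0)
  have hd0 : 0 ≤ d := by positivity
  have hd2 : d ≤ 2 := by
    rw [hddef, div_le_iff₀ ht0]; nlinarith
  have hc : 0 ≤ n + 2 * k - 2 - d := by
    have : n + 2 * k - 2 = t + 1 := by rw [htdef]; ring
    nlinarith
  have hsq : (n + 2 * k - 2 - d) ^ 2 ≤ (n + 2 * k - 2) ^ 2 - 8 * k * (k - 1) := by
    have hs : n + 2 * k - 2 = t + 1 := by rw [htdef]; ring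
    nlinarith [mul_nonneg hd0 hd0]
  have hsqrt : n + 2 * k - 2 - d ≤ Real.sqrt ((n + 2 * k - 2) ^ 2 - 8 * k * (k - 1)) :=
    (Real.le_sqrt hc (by nlinarith [sq_nonneg (n + 2 * k - 2 - d)])).mpr hsq
  have heq : d = 2 * (2 * k * (k - 1) / t) := by rw [hddef]; ring
  linarith

end
end
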